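/- arXiv:1401.6734 — 4 statements merged into one kernel-verified Lean document; each statement's English description precedes it below -/
import Mathlib

section
/- Let k ≥ 2, m, t be positive integers with t > k. Consider an edge-coloring c of the complete k-uniform hypergraph on n = 4·m·t^(2k-1) vertices (i.e., a function c from the k-element subsets of an n-element vertex set V to some color set) which is m-good, meaning that for every (k-1)-element subset S of V and every color γ, the number of k-element sets e containing S with c(e) = γ is at most m. Then there exists a subset T of V with |T| ≥ t such that all k-element subsets of T receive pairwise distinct colors under c. -/
open Finset

private lemma aux_count_supersets {α : Type*} [DecidableEq α] [Fintype α]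
    (u : Finset α) (s : ℕ) (h : u.card ≤ s) :
    (((univ : Finset α).powersetCard s).filter (fun A => u ⊆ A)).card
      = (Fintype.card α - u.card).choose (s - u.card) := by
  classical
  rw [← Finset.card_compl u, ← Finset.card_powersetCard (s - u.card) uᶜ]
  refine Finset.card_nbij' (fun A => A \ u) (fun B => B ∪ u) ?_ ?_ ?_ ?_
  · intro A hA
    simp only [mem_coe, mem_filter, mem_powersetCard] at hA
    obtain ⟨⟨-, hcard⟩, hu⟩ := hA
    rw [mem_coe, mem_powersetCard]
    refine ⟨fun x hx => ?_, ?_⟩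
    · rw [Finset.mem_sdiff] at hx
      exact Finset.mem_compl.mpr hx.2
    · rw [Finset.card_sdiff_of_subset hu, hcard]
  · intro B hB
    rw [mem_coe, mem_powersetCard] at hB
    obtain ⟨hsub, hcard⟩ := hB
    have hdisj : Disjoint B u := by
      rw [Finset.disjoint_right]
      intro x hx hxB
      exact Finset.mem_compl.mp (hsub hxB) hx
    simp only [mem_coe, mem_filter, mem_powersetCard]
    refine ⟨⟨Finset.subset_univ _, ?_⟩, Finset.subset_union_right⟩
    rw [Finset.card_union_of_disjoint hdisj, hcard]
    omega
  · intro A hA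
    simp only [mem_coe, mem_filter, mem_powersetCard] at hA
    exact Finset.sdiff_union_of_subset hA.2
  · intro B hB
    rw [mem_coe, mem_powersetCard] at hB
    ext x
    simp only [Finset.mem_sdiff, Finset.mem_union]
    constructor
    · rintro ⟨hx | hx, hxu⟩
      · exact hx
      · exact absurd hx hxu
    · intro hx
      exact ⟨Or.inl hx, fun hxu => Finset.mem_compl.mp (hB.1 hx) hxu⟩

private lemma aux_vander (k M : ℕ) (hk : 1 ≤ k) :
    ∑ i ∈ Finset.range k, k.choose i * M.choose (k - 1 - i) = (k + M).choose (k - 1) := by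
  rw [Nat.add_choose_eq, Finset.Nat.sum_antidiagonal_eq_sum_range_succ_mk,
    show (k - 1).succ = k from by omega]

private lemma aux_chain (n k i T : ℕ) (hk : 2 ≤ k) (hik : i < k) (hkT : k < T) (hn : 2 * T ≤ n) :
    n.choose k * ((n - k).choose (k - 1 - i) * (n - (2 * k - i)).choose (2 * T - (2 * k - i)))
      ≤ n.choose (2 * T - 1) * ((2 * T - 1).choose k * ((2 * T - 1 - k).choose (k - 1 - i))) := by
  set u := 2 * k - 1 - i with hu
  have h1 : k - 1 - i = u - k := by omega
  have h2 : 2 * T - (2 * k - i) = (2 * T - 1) - u := by omega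
  have hmono : (n - (2 * k - i)).choose (2 * T - (2 * k - i))
      ≤ (n - u).choose ((2 * T - 1) - u) := by
    rw [h2]
    exact Nat.choose_le_choose _ (by omega)
  calc n.choose k * ((n - k).choose (k - 1 - i) * (n - (2 * k - i)).choose (2 * T - (2 * k - i)))
      ≤ n.choose k * ((n - k).choose (u - k) * (n - u).choose ((2 * T - 1) - u)) := by
        rw [h1]
        exact Nat.mul_le_mul_left _ (Nat.mul_le_mul_left _ hmono)
    _ = (n.choose k * (n - k).choose (u - k)) * (n - u).choose ((2 * T - 1) - u) := by ring
    _ = (n.choose u * u.choose k) * (n - u).choose ((2 * T - 1) - u) := by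
        rw [Nat.choose_mul (n := n) (show k ≤ u by omega)]
    _ = u.choose k * (n.choose u * (n - u).choose ((2 * T - 1) - u)) := by ring
    _ = u.choose k * (n.choose (2 * T - 1) * (2 * T - 1).choose u) := by
        rw [Nat.choose_mul (n := n) (show u ≤ 2 * T - 1 by omega)]
    _ = n.choose (2 * T - 1) * ((2 * T - 1).choose u * u.choose k) := by ring
    _ = n.choose (2 * T - 1) * ((2 * T - 1).choose k * ((2 * T - 1 - k).choose (u - k))) := by
        rw [Nat.choose_mul (n := 2 * T - 1) (show k ≤ u by omega)]
    _ = _ := by rw [h1]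

private lemma aux_pow_fact (k : ℕ) (hk : 3 ≤ k) :
    2 ^ (2 * k - 1) ≤ 3 * (k.factorial * (k - 1).factorial) := by
  induction k with
  | zero => omega
  | succ p ih =>
    rcases Nat.lt_or_ge p 3 with hp | hp
    · have hp2 : p = 2 := by omega
      subst hp2
      norm_num [Nat.factorial]
    · have h1 := ih (by omega)
      have h2 : 2 * (p + 1) - 1 = (2 * p - 1) + 2 := by omega
      have h3 : (p + 1).factorial = (p + 1) * p.factorial := rfl
      have h4 : (p + 1 - 1).factorial = p.factorial := by norm_num
      rw [h2, pow_add, h3, h4]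
      have h5 : p.factorial = p * (p - 1).factorial := by
        obtain ⟨q, rfl⟩ : ∃ q, p = q + 1 := ⟨p - 1, by omega⟩
        simp [Nat.factorial_succ]
      calc 2 ^ (2 * p - 1) * 2 ^ 2 ≤ 3 * (p.factorial * (p - 1).factorial) * 2 ^ 2 :=
            Nat.mul_le_mul_right _ h1
        _ ≤ 3 * ((p + 1) * p.factorial * p.factorial) := by
            rw [h5]
            calc 3 * (p * (p - 1).factorial * (p - 1).factorial) * 2 ^ 2
                = 3 * (p * (p - 1).factorial * (p - 1).factorial) * 4 := by norm_num
              _ ≤ 3 * (p * (p - 1).factorial * (p - 1).factorial) * ((p + 1) * p) :=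
                  Nat.mul_le_mul_left _ (by nlinarith)
              _ = 3 * ((p + 1) * (p * (p - 1).factorial) * (p * (p - 1).factorial)) := by ring

private lemma aux_key (k t m : ℕ) (hk : 2 ≤ k) (hkt : k < t) (hm : 1 ≤ m) :
    m * ((2 * t - 1).choose k * (2 * t - 1).choose (k - 1)) + (2 * t - 1)
      ≤ 4 * m * t ^ (2 * k - 1) := by
  have ht3 : 3 ≤ t := by omega
  suffices h : (2 * t - 1).choose k * (2 * t - 1).choose (k - 1) + (2 * t - 1) ≤ 4 * t ^ (2 * k - 1) by
    calc m * ((2 * t - 1).choose k * (2 * t - 1).choose (k - 1)) + (2 * t - 1)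
        ≤ m * ((2 * t - 1).choose k * (2 * t - 1).choose (k - 1) + (2 * t - 1)) := by
          have : 2 * t - 1 ≤ m * (2 * t - 1) := Nat.le_mul_of_pos_left _ hm
          nlinarith
      _ ≤ m * (4 * t ^ (2 * k - 1)) := Nat.mul_le_mul_left _ h
      _ = 4 * m * t ^ (2 * k - 1) := by ring
  rcases Nat.eq_or_lt_of_le hk with hk2 | hk3
  · -- k = 2
    obtain ⟨s, rfl⟩ : ∃ s, t = s + 3 := ⟨t - 3, by omega⟩
    rw [← hk2]
    have e1 : 2 * (s + 3) - 1 = 2 * s + 5 := by omega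
    have e2 : (2 : ℕ) - 1 = 1 := rfl
    rw [e1, e2, Nat.choose_one_right, Nat.choose_two_right]
    have e3' : 2 * s + 5 - 1 = 2 * (s + 2) := by omega
    have e3 : (2 * s + 5) * (2 * (s + 2)) = ((2 * s + 5) * (s + 2)) * 2 := by ring
    rw [e3', e3, Nat.mul_div_cancel _ (by norm_num)]
    have e4 : 2 * 2 - 1 = 3 := rfl
    rw [e4]
    ring_nf
    nlinarith [sq_nonneg s]
  · -- k ≥ 3
    have hfac : (2 * t - 1).choose k * (2 * t - 1).choose (k - 1) ≤ 3 * t ^ (2 * k - 1) := by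
      have hpos : 0 < k.factorial * (k - 1).factorial :=
        Nat.mul_pos (Nat.factorial_pos _) (Nat.factorial_pos _)
      have hmul : ((2 * t - 1).choose k * (2 * t - 1).choose (k - 1)) * (k.factorial * (k - 1).factorial)
          ≤ (3 * t ^ (2 * k - 1)) * (k.factorial * (k - 1).factorial) := by
        have hd1 : k.factorial * (2 * t - 1).choose k = (2 * t - 1).descFactorial k :=
          ((2 * t - 1).descFactorial_eq_factorial_mul_choose k).symm
        have hd2 : (k - 1).factorial * (2 * t - 1).choose (k - 1)
            = (2 * t - 1).descFactorial (k - 1) :=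
          ((2 * t - 1).descFactorial_eq_factorial_mul_choose (k - 1)).symm
        calc ((2 * t - 1).choose k * (2 * t - 1).choose (k - 1)) * (k.factorial * (k - 1).factorial)
            = (k.factorial * (2 * t - 1).choose k) * ((k - 1).factorial * (2 * t - 1).choose (k - 1)) := by
              ring
          _ = (2 * t - 1).descFactorial k * (2 * t - 1).descFactorial (k - 1) := by
              rw [hd1, hd2]
          _ ≤ (2 * t - 1) ^ k * (2 * t - 1) ^ (k - 1) :=
              Nat.mul_le_mul (Nat.descFactorial_le_pow _ _) (Nat.descFactorial_le_pow _ _)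
          _ = (2 * t - 1) ^ (2 * k - 1) := by
              rw [← pow_add]
              congr 1
              omega
          _ ≤ (2 * t) ^ (2 * k - 1) := Nat.pow_le_pow_left (by omega) _
          _ = 2 ^ (2 * k - 1) * t ^ (2 * k - 1) := by rw [mul_pow]
          _ ≤ (3 * (k.factorial * (k - 1).factorial)) * t ^ (2 * k - 1) :=
              Nat.mul_le_mul_right _ (aux_pow_fact k hk3)
          _ = (3 * t ^ (2 * k - 1)) * (k.factorial * (k - 1).factorial) := by ring
      exact Nat.le_of_mul_le_mul_right hmul hpos
    have hpow : 2 * t ≤ t ^ (2 * k - 1) := by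
      calc 2 * t ≤ t * t := by nlinarith
        _ = t ^ 2 := (sq t).symm
        _ ≤ t ^ (2 * k - 1) := Nat.pow_le_pow_right (by omega) (by omega)
    omega

open Finset

theorem stmt_0 {V C : Type*} [Fintype V] [DecidableEq V] [DecidableEq C]
    (k m t : ℕ) (hk : 2 ≤ k) (hm : 1 ≤ m) (ht : k < t)
    (hn : Fintype.card V = 4 * m * t ^ (2 * k - 1))
    (c : Finset V → C)
    (hgood : ∀ S : Finset V, S.card = k - 1 → ∀ γ : C,
      ((Finset.powersetCard k (Finset.univ : Finset V)).filter
        (fun e => S ⊆ e ∧ c e = γ)).card ≤ m) :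
    ∃ T : Finset V, t ≤ T.card ∧
      ∀ e₁ ∈ Finset.powersetCard k T, ∀ e₂ ∈ Finset.powersetCard k T,
        c e₁ = c e₂ → e₁ = e₂ := by
  classical
  have ht3 : 3 ≤ t := by omega
  set N := Fintype.card V with hN
  have hNval : N = 4 * m * t ^ (2 * k - 1) := hn
  have hNbig : 2 * t ≤ N := by
    rw [hNval]
    have h1 : t ^ 3 ≤ t ^ (2 * k - 1) := Nat.pow_le_pow_right (by omega) (by omega)
    have h2 : 2 * t ≤ 4 * t ^ 3 := by
      have := Nat.le_self_pow (show (3:ℕ) ≠ 0 by norm_num) t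
      omega
    have h3 : 4 * t ^ (2 * k - 1) ≤ 4 * m * t ^ (2 * k - 1) := by nlinarith
    omega
  have hVne : Nonempty V := by
    rw [← Fintype.card_pos_iff, ← hN]
    omega
  -- choice function
  set g : Finset V → V := fun s => if h : s.Nonempty then h.choose else Classical.arbitrary V
    with hgdef
  have hg : ∀ s : Finset V, s.Nonempty → g s ∈ s := by
    intro s hs
    rw [hgdef]
    simp only [dif_pos hs]
    exact hs.choose_spec
  set Edges : Finset (Finset V) := Finset.powersetCard k Finset.univ with hEdges
  have hEcard : Edges.card = N.choose k := by
    rw [hEdges, Finset.card_powersetCard, Finset.card_univ]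
  set P : Finset (Finset V × Finset V) :=
    (Edges ×ˢ Edges).filter
      (fun p => p.1 ≠ p.2 ∧ c p.1 = c p.2 ∧ g (symmDiff p.1 p.2) ∈ p.2) with hP
  have hPmem : ∀ p ∈ P, p.1.card = k ∧ p.2.card = k ∧ p.1 ≠ p.2 ∧ c p.1 = c p.2 ∧
      g (symmDiff p.1 p.2) ∈ p.2 := by
    intro p hp
    simp only [hP, hEdges, Finset.mem_filter, Finset.mem_product,
      Finset.mem_powersetCard] at hp
    tauto
  have hilt : ∀ e1 e2 : Finset V, e1.card = k → e2.card = k → e1 ≠ e2 →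
      (e1 ∩ e2).card < k := by
    intro e1 e2 h1 h2 hne
    rcases Nat.lt_or_ge ((e1 ∩ e2).card) k with h | h
    · exact h
    · exfalso
      have heq : e1 ∩ e2 = e1 :=
        Finset.eq_of_subset_of_card_le Finset.inter_subset_left (by omega)
      have h12 : e1 ⊆ e2 := by
        rw [← heq]; exact Finset.inter_subset_right
      exact hne (Finset.eq_of_subset_of_card_le h12 (by omega))
  set BB : Finset V → Finset (Finset V × Finset V) :=
    (fun A => P.filter (fun p => p.1 ⊆ A ∧ p.2 ⊆ A)) with hBB
  set f : ℕ → ℕ := fun i => (N - (2 * k - i)).choose (2 * t - (2 * k - i)) with hf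
  -- Step 1 : double counting
  have h1 : ∑ A ∈ Finset.powersetCard (2 * t) (Finset.univ : Finset V), (BB A).card
      = ∑ p ∈ P, ((Finset.powersetCard (2 * t) (Finset.univ : Finset V)).filter
          (fun A => p.1 ∪ p.2 ⊆ A)).card := by
    simp only [hBB, Finset.card_filter]
    rw [Finset.sum_comm]
    refine Finset.sum_congr rfl fun p _ => Finset.sum_congr rfl fun A _ => ?_
    simp only [Finset.union_subset_iff]
  -- Step 2 : evaluate inner cardinality
  have h2 : ∀ p ∈ P, ((Finset.powersetCard (2 * t) (Finset.univ : Finset V)).filter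
      (fun A => p.1 ∪ p.2 ⊆ A)).card = f ((p.1 ∩ p.2).card) := by
    intro p hp
    obtain ⟨hc1, hc2, hne, -, -⟩ := hPmem p hp
    have hi : (p.1 ∩ p.2).card < k := hilt _ _ hc1 hc2 hne
    have hu : (p.1 ∪ p.2).card = 2 * k - (p.1 ∩ p.2).card := by
      have := Finset.card_union_add_card_inter p.1 p.2
      omega
    rw [aux_count_supersets _ _ (by rw [hu]; omega), hu, hf, ← hN]
  -- Step 3 : fiberwise
  have hmaps : ∀ p ∈ P, (p.1 ∩ p.2).card ∈ Finset.range k := by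
    intro p hp
    obtain ⟨hc1, hc2, hne, -, -⟩ := hPmem p hp
    exact Finset.mem_range.mpr (hilt _ _ hc1 hc2 hne)
  have h3 : ∑ p ∈ P, f ((p.1 ∩ p.2).card)
      = ∑ i ∈ Finset.range k,
          ∑ p ∈ P.filter (fun p => (p.1 ∩ p.2).card = i), f i :=
    (Finset.sum_fiberwise_of_maps_to' hmaps f).symm
  -- Step 4 : per-fiber bound
  have h4 : ∀ i ∈ Finset.range k,
      2 * ((P.filter (fun p => (p.1 ∩ p.2).card = i)).card * f i)
        ≤ m * (k.choose i * (N.choose (2 * t - 1) *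
            ((2 * t - 1).choose k * (2 * t - 1 - k).choose (k - 1 - i)))) := by
    intro i hi
    have hik : i < k := Finset.mem_range.mp hi
    set Qi : Finset (Finset V × Finset V) :=
      (Edges ×ˢ Edges).filter
        (fun p => p.1 ≠ p.2 ∧ c p.1 = c p.2 ∧ (p.1 ∩ p.2).card = i) with hQi
    have hQmem : ∀ p ∈ Qi, p.1.card = k ∧ p.2.card = k ∧ p.1 ≠ p.2 ∧ c p.1 = c p.2 ∧
        (p.1 ∩ p.2).card = i := by
      intro p hp
      simp only [hQi, hEdges, Finset.mem_filter, Finset.mem_product,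
        Finset.mem_powersetCard] at hp
      tauto
    have hfib_eq : P.filter (fun p => (p.1 ∩ p.2).card = i)
        = Qi.filter (fun p => g (symmDiff p.1 p.2) ∈ p.2) := by
      ext p
      simp only [hP, hQi, Finset.mem_filter, Finset.mem_product]
      tauto
    have hgd : ∀ p ∈ Qi, g (symmDiff p.1 p.2) ∈ symmDiff p.1 p.2 := by
      intro p hp
      obtain ⟨-, -, hne, -, -⟩ := hQmem p hp
      apply hg
      rw [Finset.nonempty_iff_ne_empty]
      intro h0
      exact hne (symmDiff_eq_bot.mp (by rw [Finset.bot_eq_empty]; exact h0))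
    have hsplit : Qi.filter (fun p => g (symmDiff p.1 p.2) ∈ p.1)
        ∪ Qi.filter (fun p => g (symmDiff p.1 p.2) ∈ p.2) = Qi := by
      rw [Finset.filter_union_right]
      apply Finset.filter_true_of_mem
      intro p hp
      have hmem := hgd p hp
      rw [Finset.mem_symmDiff] at hmem
      tauto
    have hdisj : Disjoint (Qi.filter (fun p => g (symmDiff p.1 p.2) ∈ p.1))
        (Qi.filter (fun p => g (symmDiff p.1 p.2) ∈ p.2)) := by
      rw [Finset.disjoint_left]
      intro p hp1 hp2
      rw [Finset.mem_filter] at hp1 hp2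
      have hmem := hgd p hp1.1
      rw [Finset.mem_symmDiff] at hmem
      tauto
    have hswap : (Qi.filter (fun p => g (symmDiff p.1 p.2) ∈ p.1)).card
        = (Qi.filter (fun p => g (symmDiff p.1 p.2) ∈ p.2)).card := by
      apply Finset.card_nbij' Prod.swap Prod.swap
      · intro p hp
        rw [Finset.mem_coe, Finset.mem_filter] at hp ⊢
        obtain ⟨hpQ, hpg⟩ := hp
        obtain ⟨h1, h2, hne, hcc, hci⟩ := hQmem p hpQ
        have hpE : p.1 ∈ Edges ∧ p.2 ∈ Edges := by
          simp only [hQi, Finset.mem_filter, Finset.mem_product] at hpQ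
          exact ⟨hpQ.1.1, hpQ.1.2⟩
        constructor
        · simp only [hQi, Finset.mem_filter, Finset.mem_product, Prod.fst_swap,
            Prod.snd_swap]
          exact ⟨⟨hpE.2, hpE.1⟩, hne.symm, hcc.symm, by rw [Finset.inter_comm]; exact hci⟩
        · simp only [Prod.fst_swap, Prod.snd_swap]
          rw [symmDiff_comm]
          exact hpg
      · intro p hp
        rw [Finset.mem_coe, Finset.mem_filter] at hp ⊢
        obtain ⟨hpQ, hpg⟩ := hp
        obtain ⟨h1, h2, hne, hcc, hci⟩ := hQmem p hpQ
        have hpE : p.1 ∈ Edges ∧ p.2 ∈ Edges := by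
          simp only [hQi, Finset.mem_filter, Finset.mem_product] at hpQ
          exact ⟨hpQ.1.1, hpQ.1.2⟩
        constructor
        · simp only [hQi, Finset.mem_filter, Finset.mem_product, Prod.fst_swap,
            Prod.snd_swap]
          exact ⟨⟨hpE.2, hpE.1⟩, hne.symm, hcc.symm, by rw [Finset.inter_comm]; exact hci⟩
        · simp only [Prod.fst_swap, Prod.snd_swap]
          rw [symmDiff_comm]
          exact hpg
      · intro p _; exact Prod.swap_swap p
      · intro p _; exact Prod.swap_swap p
    have h2card : 2 * (Qi.filter (fun p => g (symmDiff p.1 p.2) ∈ p.2)).card = Qi.card := by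
      have hcu := Finset.card_union_of_disjoint hdisj
      rw [hsplit] at hcu
      omega
    -- bound on Qi.card
    have hRbound : ∀ e1 ∈ Edges,
        (Edges.filter (fun e2 => c e1 = c e2 ∧ (e1 ∩ e2).card = i ∧ e1 ≠ e2)).card
          ≤ k.choose i * ((N - k).choose (k - 1 - i) * m) := by
      intro e1 he1
      have he1k : e1.card = k := by
        rw [hEdges, Finset.mem_powersetCard] at he1
        exact he1.2
      have hsub2 : Edges.filter (fun e2 => c e1 = c e2 ∧ (e1 ∩ e2).card = i ∧ e1 ≠ e2)
          ⊆ ((Finset.powersetCard i e1) ×ˢ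
              (Finset.powersetCard (k - 1 - i) (Finset.univ \ e1))).biUnion
              (fun q => (Finset.powersetCard k (Finset.univ : Finset V)).filter
                (fun e => q.1 ∪ q.2 ⊆ e ∧ c e = c e1)) := by
        intro e2 he2
        rw [Finset.mem_filter] at he2
        obtain ⟨he2E, hc12, hinter, hne12⟩ := he2
        have he2k : e2.card = k := by
          rw [hEdges, Finset.mem_powersetCard] at he2E
          exact he2E.2
        have hcsd : (e2 \ e1).card = k - i := by
          have h := Finset.card_sdiff_add_card_inter e2 e1
          rw [Finset.inter_comm] at h
          omega
        have hsd : (e2 \ e1).Nonempty := by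
          rw [← Finset.card_pos, hcsd]
          omega
        have hw := hg _ hsd
        rw [Finset.mem_biUnion]
        refine ⟨(e1 ∩ e2, (e2 \ e1).erase (g (e2 \ e1))), ?_, ?_⟩
        · rw [Finset.mem_product]
          constructor
        -- first component
          · rw [Finset.mem_powersetCard]
            exact ⟨Finset.inter_subset_left, hinter⟩
          · rw [Finset.mem_powersetCard]
            constructor
            · intro x hx
              have hx' : x ∈ e2 \ e1 := Finset.erase_subset _ _ hx
              rw [Finset.mem_sdiff] at hx' ⊢
              exact ⟨Finset.mem_univ _, hx'.2⟩
            · rw [Finset.card_erase_of_mem hw, hcsd]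
              omega
        · rw [Finset.mem_filter]
          refine ⟨by rw [← hEdges]; exact he2E, ?_, hc12.symm⟩
          apply Finset.union_subset
          · exact Finset.inter_subset_right
          · exact (Finset.erase_subset _ _).trans Finset.sdiff_subset
      calc (Edges.filter (fun e2 => c e1 = c e2 ∧ (e1 ∩ e2).card = i ∧ e1 ≠ e2)).card
          ≤ (((Finset.powersetCard i e1) ×ˢ
              (Finset.powersetCard (k - 1 - i) (Finset.univ \ e1))).biUnion
              (fun q => (Finset.powersetCard k (Finset.univ : Finset V)).filter
                (fun e => q.1 ∪ q.2 ⊆ e ∧ c e = c e1))).card :=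
            Finset.card_le_card hsub2
        _ ≤ ∑ q ∈ (Finset.powersetCard i e1) ×ˢ
              (Finset.powersetCard (k - 1 - i) (Finset.univ \ e1)),
              ((Finset.powersetCard k (Finset.univ : Finset V)).filter
                (fun e => q.1 ∪ q.2 ⊆ e ∧ c e = c e1)).card := Finset.card_biUnion_le
        _ ≤ ∑ _q ∈ (Finset.powersetCard i e1) ×ˢ
              (Finset.powersetCard (k - 1 - i) (Finset.univ \ e1)), m := by
            apply Finset.sum_le_sum
            intro q hq
            rw [Finset.mem_product, Finset.mem_powersetCard, Finset.mem_powersetCard] at hq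
            apply hgood
            have hdisjq : Disjoint q.1 q.2 := by
              rw [Finset.disjoint_left]
              intro x hx1 hx2
              have := hq.2.1 hx2
              rw [Finset.mem_sdiff] at this
              exact this.2 (hq.1.1 hx1)
            rw [Finset.card_union_of_disjoint hdisjq, hq.1.2, hq.2.2]
            omega
        _ = ((Finset.powersetCard i e1) ×ˢ
              (Finset.powersetCard (k - 1 - i) (Finset.univ \ e1))).card * m := by
            rw [Finset.sum_const, smul_eq_mul]
        _ = k.choose i * ((N - k).choose (k - 1 - i) * m) := by
            rw [Finset.card_product, Finset.card_powersetCard, Finset.card_powersetCard,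
              he1k, Finset.card_sdiff_of_subset (Finset.subset_univ e1), Finset.card_univ, he1k,
              ← hN]
            ring
    have hQbound : Qi.card ≤ N.choose k * (k.choose i * ((N - k).choose (k - 1 - i) * m)) := by
      have hQsub : Qi ⊆ Edges.biUnion (fun e1 => {e1} ×ˢ
          (Edges.filter (fun e2 => c e1 = c e2 ∧ (e1 ∩ e2).card = i ∧ e1 ≠ e2))) := by
        intro p hp
        obtain ⟨h1, h2, hne, hcc, hci⟩ := hQmem p hp
        have hpE : p.1 ∈ Edges ∧ p.2 ∈ Edges := by
          simp only [hQi, Finset.mem_filter, Finset.mem_product] at hp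
          exact ⟨hp.1.1, hp.1.2⟩
        rw [Finset.mem_biUnion]
        refine ⟨p.1, hpE.1, ?_⟩
        rw [Finset.mem_product]
        refine ⟨Finset.mem_singleton_self _, ?_⟩
        rw [Finset.mem_filter]
        exact ⟨hpE.2, hcc, hci, hne⟩
      calc Qi.card ≤ (Edges.biUnion (fun e1 => {e1} ×ˢ
            (Edges.filter (fun e2 => c e1 = c e2 ∧ (e1 ∩ e2).card = i ∧ e1 ≠ e2)))).card :=
            Finset.card_le_card hQsub
        _ ≤ ∑ e1 ∈ Edges, ({e1} ×ˢ
            (Edges.filter (fun e2 => c e1 = c e2 ∧ (e1 ∩ e2).card = i ∧ e1 ≠ e2))).card :=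
            Finset.card_biUnion_le
        _ ≤ ∑ _e1 ∈ Edges, k.choose i * ((N - k).choose (k - 1 - i) * m) := by
            apply Finset.sum_le_sum
            intro e1 he1
            rw [Finset.card_product, Finset.card_singleton, one_mul]
            exact hRbound e1 he1
        _ = Edges.card * (k.choose i * ((N - k).choose (k - 1 - i) * m)) := by
            rw [Finset.sum_const, smul_eq_mul]
        _ = N.choose k * (k.choose i * ((N - k).choose (k - 1 - i) * m)) := by
            rw [hEcard]
    calc 2 * ((P.filter (fun p => (p.1 ∩ p.2).card = i)).card * f i)
        = (2 * (Qi.filter (fun p => g (symmDiff p.1 p.2) ∈ p.2)).card) * f i := by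
          rw [hfib_eq]; ring
      _ = Qi.card * f i := by rw [h2card]
      _ ≤ (N.choose k * (k.choose i * ((N - k).choose (k - 1 - i) * m))) * f i :=
          Nat.mul_le_mul_right _ hQbound
      _ = m * (k.choose i * (N.choose k * ((N - k).choose (k - 1 - i) * f i))) := by ring
      _ ≤ m * (k.choose i * (N.choose (2 * t - 1) *
            ((2 * t - 1).choose k * (2 * t - 1 - k).choose (k - 1 - i)))) := by
          apply Nat.mul_le_mul_left
          apply Nat.mul_le_mul_left
          rw [hf]
          exact aux_chain N k i t hk hik ht hNbig
  -- Step 5 : assemble the bound on the total sum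
  have h6 : ∑ A ∈ Finset.powersetCard (2 * t) (Finset.univ : Finset V), (BB A).card
      ≤ t * N.choose (2 * t) := by
    have h5 : 2 * ∑ A ∈ Finset.powersetCard (2 * t) (Finset.univ : Finset V), (BB A).card
        ≤ N.choose (2 * t) * (2 * t) := by
      calc 2 * ∑ A ∈ Finset.powersetCard (2 * t) (Finset.univ : Finset V), (BB A).card
          = 2 * ∑ p ∈ P, f ((p.1 ∩ p.2).card) := by
            rw [h1]
            congr 1
            exact Finset.sum_congr rfl h2
        _ = 2 * ∑ i ∈ Finset.range k,
              ∑ p ∈ P.filter (fun p => (p.1 ∩ p.2).card = i), f i := by rw [h3]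
        _ = ∑ i ∈ Finset.range k,
              2 * ((P.filter (fun p => (p.1 ∩ p.2).card = i)).card * f i) := by
            rw [Finset.mul_sum]
            refine Finset.sum_congr rfl fun i _ => ?_
            rw [Finset.sum_const, smul_eq_mul]
        _ ≤ ∑ i ∈ Finset.range k, m * (k.choose i * (N.choose (2 * t - 1) *
              ((2 * t - 1).choose k * (2 * t - 1 - k).choose (k - 1 - i)))) :=
            Finset.sum_le_sum h4
        _ = (m * (N.choose (2 * t - 1) * (2 * t - 1).choose k)) *
              ∑ i ∈ Finset.range k, k.choose i * (2 * t - 1 - k).choose (k - 1 - i) := by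
            rw [Finset.mul_sum]
            exact Finset.sum_congr rfl fun i _ => by ring
        _ = (m * (N.choose (2 * t - 1) * (2 * t - 1).choose k)) *
              (2 * t - 1).choose (k - 1) := by
            rw [aux_vander k (2 * t - 1 - k) (by omega),
              show k + (2 * t - 1 - k) = 2 * t - 1 from by omega]
        _ = N.choose (2 * t - 1) * (m * ((2 * t - 1).choose k * (2 * t - 1).choose (k - 1))) := by
            ring
        _ ≤ N.choose (2 * t - 1) * (N - (2 * t - 1)) := by
            apply Nat.mul_le_mul_left
            have hkey := aux_key k t m hk ht hm
            omega
        _ = N.choose (2 * t) * (2 * t) := by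
            have h := Nat.choose_succ_right_eq N (2 * t - 1)
            rw [show 2 * t - 1 + 1 = 2 * t from by omega] at h
            omega
    have hds : N.choose (2 * t) * (2 * t) = 2 * (t * N.choose (2 * t)) := by ring
    omega
  -- Step 6 : pigeonhole
  have hne2 : (Finset.powersetCard (2 * t) (Finset.univ : Finset V)).Nonempty := by
    rw [Finset.powersetCard_nonempty, Finset.card_univ, ← hN]
    omega
  have hsum_le : ∑ A ∈ Finset.powersetCard (2 * t) (Finset.univ : Finset V), (BB A).card
      ≤ ∑ _A ∈ Finset.powersetCard (2 * t) (Finset.univ : Finset V), t := by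
    rw [Finset.sum_const, smul_eq_mul, Finset.card_powersetCard, Finset.card_univ, ← hN]
    exact h6.trans (le_of_eq (Nat.mul_comm _ _))
  obtain ⟨A, hA, hAle⟩ := Finset.exists_le_of_sum_le hne2 hsum_le
  rw [Finset.mem_powersetCard] at hA
  -- Step 7 : construct T
  set D := (BB A).image (fun p => g (symmDiff p.1 p.2)) with hD
  have hsubA : A \ D ⊆ A := Finset.sdiff_subset
  have hpairfalse : ∀ a b : Finset V, a ⊆ A \ D → b ⊆ A \ D → a.card = k → b.card = k →
      a ≠ b → c a = c b → g (symmDiff a b) ∈ b → False := by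
    intro a b ha hb hak hbk hab hcab hgb
    have hmemP : (a, b) ∈ BB A := by
      simp only [hBB, hP, hEdges, Finset.mem_filter, Finset.mem_product,
        Finset.mem_powersetCard]
      exact ⟨⟨⟨⟨Finset.subset_univ _, hak⟩, ⟨Finset.subset_univ _, hbk⟩⟩,
        hab, hcab, hgb⟩, ha.trans hsubA, hb.trans hsubA⟩
    have hgD : g (symmDiff a b) ∈ D := by
      rw [hD]
      exact Finset.mem_image.mpr ⟨(a, b), hmemP, rfl⟩
    have hmem2 : g (symmDiff a b) ∈ A \ D := hb hgb
    exact (Finset.mem_sdiff.mp hmem2).2 hgD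
  refine ⟨A \ D, ?_, ?_⟩
  · have hDle : D.card ≤ t := le_trans (Finset.card_image_le) hAle
    have hsd := Finset.le_card_sdiff D A
    omega
  · intro e1 he1 e2 he2 hc12
    by_contra hne12
    rw [Finset.mem_powersetCard] at he1 he2
    have hgmem : g (symmDiff e1 e2) ∈ symmDiff e1 e2 := by
      apply hg
      rw [Finset.nonempty_iff_ne_empty]
      intro h0
      exact hne12 (symmDiff_eq_bot.mp (by rw [Finset.bot_eq_empty]; exact h0))
    rw [Finset.mem_symmDiff] at hgmem
    rcases hgmem with ⟨hin1, hnot2⟩ | ⟨hin2, hnot1⟩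
    · exact hpairfalse e2 e1 he2.1 he1.1 he2.2 he1.2 (Ne.symm hne12) hc12.symm
        (by rw [symmDiff_comm]; exact hin1)
    · exact hpairfalse e1 e2 he1.1 he2.1 he1.2 he2.2 hne12 hc12 hin2
end

section
/- Let k ≥ 2, m be positive integers and let c be an m-good edge-coloring of the complete k-uniform hypergraph on an n-element vertex set V (meaning every (k-1)-element subset of V is contained in at most m edges of any particular color). For 0 ≤ s ≤ k-1, let A_s denote the number of unordered pairs {e₁, e₂} of distinct k-element subsets of V with c(e₁) = c(e₂) and |e₁ ∩ e₂| = s. Then A_s ≤ m · n^(2k-s-1) / (2 · s! · ((k-s)!)²). -/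
/-- The number of unordered pairs of distinct same-color edges intersecting in `s`
vertices is half the number of such ordered pairs. -/
theorem stmt_1 {V C : Type*} [Fintype V] [DecidableEq V] [DecidableEq C]
    (k m s : ℕ) (hk : 2 ≤ k) (hm : 1 ≤ m) (hs : s ≤ k - 1)
    (c : Finset V → C)
    (hgood : ∀ S : Finset V, S.card = k - 1 → ∀ γ : C,
      ((Finset.powersetCard k (Finset.univ : Finset V)).filter
        (fun e => S ⊆ e ∧ c e = γ)).card ≤ m) :
    ((((Finset.powersetCard k (Finset.univ : Finset V)) ×ˢ
        (Finset.powersetCard k (Finset.univ : Finset V))).filter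
        (fun p => p.1 ≠ p.2 ∧ c p.1 = c p.2 ∧ (p.1 ∩ p.2).card = s)).card : ℝ) / 2
      ≤ (m : ℝ) * (Fintype.card V : ℝ) ^ (2 * k - s - 1) /
          (2 * (Nat.factorial s : ℝ) * ((Nat.factorial (k - s) : ℝ)) ^ 2) := by
  classical
  set n := Fintype.card V with hn
  set U := Finset.powersetCard k (Finset.univ : Finset V) with hU
  set P := (U ×ˢ U).filter
      (fun p => p.1 ≠ p.2 ∧ c p.1 = c p.2 ∧ (p.1 ∩ p.2).card = s) with hP
  set W := Finset.powersetCard (k-1) (Finset.univ : Finset V) with hW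
  set Q := (P ×ˢ W).filter (fun q => q.2 ⊆ q.1.2 ∧ q.1.1 ∩ q.1.2 ⊆ q.2) with hQ
  have hUmem : ∀ e ∈ U, e.card = k := by
    intro e he; exact (Finset.mem_powersetCard_univ.mp he)
  have hWmem : ∀ S, S ∈ W ↔ S.card = k - 1 := fun S => Finset.mem_powersetCard_univ
  have hPmem : ∀ p ∈ P, p.1.card = k ∧ p.2.card = k ∧ p.1 ≠ p.2 ∧ c p.1 = c p.2
      ∧ (p.1 ∩ p.2).card = s := by
    intro p hp
    rw [hP, Finset.mem_filter, Finset.mem_product] at hp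
    exact ⟨hUmem _ hp.1.1, hUmem _ hp.1.2, hp.2⟩
  -- Step 1 : Q.card = P.card * (k - s)
  have hQ1 : Q.card = P.card * (k - s) := by
    rw [Finset.card_eq_sum_card_fiberwise (f := Prod.fst) (t := P)
      (fun q hq => (Finset.mem_product.mp (Finset.mem_filter.mp hq).1).1)]
    rw [Finset.sum_congr rfl (fun p hp => ?_), Finset.sum_const, smul_eq_mul]
    obtain ⟨h1, h2, _, _, h5⟩ := hPmem p hp
    have hcard : (p.2 \ p.1).card = k - s := by
      have : p.2 \ p.1 = p.2 \ (p.1 ∩ p.2) := by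
        ext x; simp only [Finset.mem_sdiff, Finset.mem_inter]; tauto
      rw [this, Finset.card_sdiff_of_subset Finset.inter_subset_right, h2, h5]
    rw [← hcard]
    refine (Finset.card_bij (fun x _ => (p, p.2.erase x)) ?_ ?_ ?_).symm
    · intro x hx
      rw [Finset.mem_sdiff] at hx
      refine Finset.mem_filter.mpr ⟨Finset.mem_filter.mpr
        ⟨Finset.mem_product.mpr ⟨hp, ?_⟩, Finset.erase_subset _ _, ?_⟩, rfl⟩
      · rw [hWmem]
        rw [Finset.card_erase_of_mem hx.1, h2]
      · intro y hy
        rw [Finset.mem_inter] at hy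
        exact Finset.mem_erase.mpr ⟨fun h => hx.2 (h ▸ hy.1), hy.2⟩
    · intro x hx y hy hxy
      rw [Finset.mem_sdiff] at hx hy
      by_contra hne
      have h2' : p.2.erase x = p.2.erase y := congrArg Prod.snd hxy
      have : x ∈ p.2.erase y := Finset.mem_erase.mpr ⟨hne, hx.1⟩
      rw [← h2'] at this
      exact (Finset.mem_erase.mp this).1 rfl
    · intro q hq
      simp only [Finset.mem_filter, Finset.mem_product] at hq
      obtain ⟨⟨⟨hq1, hq2⟩, hq3, hq4⟩, hq5⟩ := hq
      rw [hWmem] at hq2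
      rw [hq5] at hq3 hq4
      have hlt : q.2.card < p.2.card := by omega
      have hne : q.2 ≠ p.2 := fun h => absurd (h ▸ rfl) (Nat.ne_of_lt hlt)
      obtain ⟨x, hx⟩ := Finset.exists_of_ssubset (Finset.ssubset_iff_subset_ne.mpr ⟨hq3, hne⟩)
      have hxe1 : x ∉ p.1 := fun h => hx.2 (hq4 (Finset.mem_inter.mpr ⟨h, hx.1⟩))
      refine ⟨x, Finset.mem_sdiff.mpr ⟨hx.1, hxe1⟩, ?_⟩
      have hsub : q.2 ⊆ p.2.erase x := fun y hy =>
        Finset.mem_erase.mpr ⟨fun h => hx.2 (h ▸ hy), hq3 hy⟩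
      have heq : q.2 = p.2.erase x := Finset.eq_of_subset_of_card_le hsub
        (by rw [Finset.card_erase_of_mem hx.1, h2, hq2])
      exact Prod.ext hq5.symm heq.symm
  -- Step 2 : Q.card ≤ m * (choose bound)
  set R := (U ×ˢ W).filter (fun r => (r.2 ∩ r.1).card = s) with hR
  have hQ2 : Q.card ≤ m * ((k.choose s * (n-k).choose (k-1-s)) * n.choose k) := by
    have h2a : Q.card ≤ m * (Q.image (fun q => (q.1.1, q.2))).card := by
      apply Finset.card_le_mul_card_image
      intro b hb
      obtain ⟨q₀, hq₀, hgb⟩ := Finset.mem_image.mp hb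
      simp only [hQ, Finset.mem_filter, Finset.mem_product] at hq₀
      have hbW : b.2 ∈ W := by rw [← hgb]; exact hq₀.1.2
      refine le_trans (Finset.card_le_card_of_injOn (fun q => q.1.2) ?_ ?_)
        (hgood b.2 ((hWmem _).mp hbW) (c b.1))
      · intro q hq
        simp only [Finset.mem_coe, Finset.mem_filter] at hq ⊢
        obtain ⟨hqQ, hgq⟩ := hq
        simp only [hQ, Finset.mem_filter, Finset.mem_product, hP] at hqQ
        obtain ⟨⟨hqP, hqW⟩, hq3, hq4⟩ := hqQ
        have hb1 : b.1 = q.1.1 := by rw [← hgq]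
        have hb2 : b.2 = q.2 := by rw [← hgq]
        exact ⟨hqP.1.2, by rw [hb2]; exact hq3, by rw [hb1]; exact hqP.2.2.1.symm⟩
      · intro q hq q' hq' hqq
        simp only [Finset.mem_coe, Finset.mem_filter] at hq hq'
        have h1 : q.1.1 = q'.1.1 := by rw [(Prod.ext_iff.mp hq.2).1, (Prod.ext_iff.mp hq'.2).1]
        have h2 : q.2 = q'.2 := by rw [(Prod.ext_iff.mp hq.2).2, (Prod.ext_iff.mp hq'.2).2]
        exact Prod.ext (Prod.ext h1 hqq) h2
    have h2b : Q.image (fun q => (q.1.1, q.2)) ⊆ R := by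
      intro b hb
      obtain ⟨q, hq, hgb⟩ := Finset.mem_image.mp hb
      simp only [hQ, Finset.mem_filter, Finset.mem_product] at hq
      obtain ⟨⟨hqP, hqW⟩, hq3, hq4⟩ := hq
      have hPm := hPmem _ hqP
      rw [hP, Finset.mem_filter, Finset.mem_product] at hqP
      rw [hR, Finset.mem_filter, Finset.mem_product, ← hgb]
      refine ⟨⟨hqP.1.1, hqW⟩, ?_⟩
      have : q.2 ∩ q.1.1 = q.1.1 ∩ q.1.2 := by
        apply Finset.Subset.antisymm
        · intro y hy
          rw [Finset.mem_inter] at hy ⊢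
          exact ⟨hy.2, hq3 hy.1⟩
        · intro y hy
          rw [Finset.mem_inter] at hy ⊢
          exact ⟨hq4 (Finset.mem_inter.mpr hy), hy.1⟩
      rw [this]
      exact hPm.2.2.2.2
    have h2c : R.card ≤ (k.choose s * (n-k).choose (k-1-s)) * (R.image Prod.fst).card := by
      apply Finset.card_le_mul_card_image
      intro e₁ he₁
      obtain ⟨r₀, hr₀, he⟩ := Finset.mem_image.mp he₁
      have he₁U : e₁ ∈ U := by
        rw [← he]; exact (Finset.mem_product.mp (Finset.mem_filter.mp hr₀).1).1
      have he₁c : e₁.card = k := hUmem _ he₁U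
      have htc : (e₁.powersetCard s ×ˢ e₁ᶜ.powersetCard (k-1-s)).card
          = k.choose s * (n-k).choose (k-1-s) := by
        rw [Finset.card_product, Finset.card_powersetCard, Finset.card_powersetCard,
          he₁c, Finset.card_compl, he₁c, hn]
      rw [← htc]
      apply Finset.card_le_card_of_injOn (fun r => (r.2 ∩ e₁, r.2 \ e₁))
      · intro r hr
        simp only [Finset.mem_coe, Finset.mem_filter] at hr ⊢
        obtain ⟨hrR, hr1⟩ := hr
        rw [hR, Finset.mem_filter, Finset.mem_product] at hrR
        obtain ⟨⟨hrU, hrW⟩, hrs⟩ := hrR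
        rw [hr1] at hrs
        rw [Finset.mem_product, Finset.mem_powersetCard, Finset.mem_powersetCard]
        refine ⟨⟨Finset.inter_subset_right, hrs⟩, ?_, ?_⟩
        · intro x hx
          rw [Finset.mem_sdiff] at hx
          exact Finset.mem_compl.mpr hx.2
        · have : r.2 \ e₁ = r.2 \ (r.2 ∩ e₁) := by
            ext x; simp only [Finset.mem_sdiff, Finset.mem_inter]; tauto
          rw [this, Finset.card_sdiff_of_subset Finset.inter_subset_left, (hWmem _).mp hrW, hrs]
      · intro r hr r' hr' hrr
        simp only [Finset.mem_coe, Finset.mem_filter] at hr hr'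
        have h2 : r.2 = r'.2 := by
          have e1 : r.2 ∩ e₁ = r'.2 ∩ e₁ := (Prod.ext_iff.mp hrr).1
          have e2 : r.2 \ e₁ = r'.2 \ e₁ := (Prod.ext_iff.mp hrr).2
          calc r.2 = r.2 \ e₁ ∪ r.2 ∩ e₁ := (Finset.sdiff_union_inter _ _).symm
            _ = r'.2 \ e₁ ∪ r'.2 ∩ e₁ := by rw [e1, e2]
            _ = r'.2 := Finset.sdiff_union_inter _ _
        exact Prod.ext (hr.2.trans hr'.2.symm) h2
    have h2d : (R.image Prod.fst).card ≤ n.choose k := by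
      have : R.image Prod.fst ⊆ U := by
        intro e he
        obtain ⟨r, hr, hre⟩ := Finset.mem_image.mp he
        rw [← hre]
        exact (Finset.mem_product.mp (Finset.mem_filter.mp hr).1).1
      calc (R.image Prod.fst).card ≤ U.card := Finset.card_le_card this
        _ = n.choose k := by rw [hU, Finset.card_powersetCard, Finset.card_univ, hn]
    calc Q.card ≤ m * (Q.image (fun q => (q.1.1, q.2))).card := h2a
      _ ≤ m * R.card := Nat.mul_le_mul_left m (Finset.card_le_card h2b)
      _ ≤ m * ((k.choose s * (n-k).choose (k-1-s)) * (R.image Prod.fst).card) :=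
          Nat.mul_le_mul_left m h2c
      _ ≤ m * ((k.choose s * (n-k).choose (k-1-s)) * n.choose k) :=
          Nat.mul_le_mul_left m (Nat.mul_le_mul_left _ h2d)
  -- Step 3 : ℕ arithmetic
  have hfa : (k-s).factorial = (k-s) * (k-1-s).factorial := by
    have hks : k - s = (k-1-s) + 1 := by omega
    rw [hks, Nat.factorial_succ]
  have hch : k.choose s * s.factorial * (k-s).factorial = k.factorial :=
    Nat.choose_mul_factorial_mul_factorial (by omega)
  have hd1 : n.choose k * k.factorial ≤ n ^ k := by
    rw [mul_comm, ← Nat.descFactorial_eq_factorial_mul_choose]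
    exact Nat.descFactorial_le_pow n k
  have hd2 : (n-k).choose (k-1-s) * (k-1-s).factorial ≤ n ^ (k-1-s) := by
    rw [mul_comm, ← Nat.descFactorial_eq_factorial_mul_choose]
    exact le_trans (Nat.descFactorial_le_pow _ _)
      (Nat.pow_le_pow_left (Nat.sub_le n k) _)
  have hnat : P.card * (s.factorial * ((k-s).factorial)^2) ≤ m * n ^ (2*k-s-1) := by
    apply Nat.le_of_mul_le_mul_right _ (show 0 < k - s by omega)
    calc P.card * (s.factorial * ((k-s).factorial)^2) * (k-s)
        = (P.card * (k-s)) * (s.factorial * ((k-s).factorial)^2) := by ring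
      _ = Q.card * (s.factorial * ((k-s).factorial)^2) := by rw [hQ1]
      _ ≤ (m * ((k.choose s * (n-k).choose (k-1-s)) * n.choose k))
            * (s.factorial * ((k-s).factorial)^2) := Nat.mul_le_mul_right _ hQ2
      _ = (m * ((n.choose k * k.factorial)
            * ((n-k).choose (k-1-s) * (k-1-s).factorial))) * (k-s) := by
          rw [← hch, hfa]; ring
      _ ≤ (m * (n ^ k * n ^ (k-1-s))) * (k-s) :=
          Nat.mul_le_mul_right _ (Nat.mul_le_mul_left m (Nat.mul_le_mul hd1 hd2))
      _ = m * n ^ (2*k-s-1) * (k-s) := by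
          rw [← pow_add]
          have : k + (k-1-s) = 2*k-s-1 := by omega
          rw [this]
  -- Step 4 : conclude over ℝ
  have hfin : (P.card : ℝ) * ((s.factorial : ℝ) * ((k-s).factorial : ℝ)^2)
      ≤ (m : ℝ) * (n : ℝ) ^ (2*k-s-1) := by exact_mod_cast hnat
  have hden : (0:ℝ) < 2 * (s.factorial : ℝ) * ((k-s).factorial : ℝ)^2 := by
    positivity
  rw [div_le_div_iff₀ (by norm_num) hden]
  nlinarith [hfin]
end

section
/- Let P be a finite set of n points in ℝ^d (d ≥ 2) and suppose that no sphere centered at a point of P contains more than m points of P; that is, for every p ∈ P and every r > 0, the number of points q ∈ P with ‖q - p‖ = r is at most m. If n ≥ 4·m·t³, then P contains a subset S of at least t points such that all pairwise distances between distinct points of S are distinct. -/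
set_option linter.unusedSectionVars false
set_option maxHeartbeats 2000000
open Finset

namespace Stmt7Aux

open scoped Classical

variable {E : Type*} [MetricSpace E] [DecidableEq E]

/-- A configuration: a small set carrying a repeated distance. -/
def IsCfg (C : Finset E) : Prop :=
  ∃ p q p' q' : E, p ≠ q ∧ p' ≠ q' ∧ dist p q = dist p' q' ∧
    ({p, q} : Set E) ≠ ({p', q'} : Set E) ∧ C = {p, q, p', q'}

noncomputable def cfgs (R : Finset E) : Finset (Finset E) :=
  R.powerset.filter IsCfg

lemma mem_cfgs {R C : Finset E} : C ∈ cfgs R ↔ C ⊆ R ∧ IsCfg C := by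
  simp [cfgs]

lemma card_triple_le (x y z : E) : ({x, y, z} : Finset E).card ≤ 3 := by
  refine le_trans (card_insert_le _ _) ?_
  refine Nat.succ_le_succ (le_trans (card_insert_le _ _) ?_)
  simp

lemma card_quad_le (p q p' q' : E) : ({p, q, p', q'} : Finset E).card ≤ 4 := by
  refine le_trans (card_insert_le _ _) (Nat.succ_le_succ (card_triple_le _ _ _))

lemma isCfg_card {C : Finset E} (h : IsCfg C) : C.card = 3 ∨ C.card = 4 := by
  obtain ⟨p, q, p', q', hpq, hpq', _, hne, rfl⟩ := h
  have h4 := card_quad_le p q p' q'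
  have h3 : 3 ≤ ({p, q, p', q'} : Finset E).card := by
    by_contra h
    push_neg at h
    have hs1 : ({p, q} : Finset E) ⊆ {p, q, p', q'} := by
      intro x hx; simp at hx ⊢; tauto
    have hs2 : ({p', q'} : Finset E) ⊆ {p, q, p', q'} := by
      intro x hx; simp at hx ⊢; tauto
    have e1 := eq_of_subset_of_card_le hs1 (by rw [card_pair hpq]; omega)
    have e2 := eq_of_subset_of_card_le hs2 (by rw [card_pair hpq']; omega)
    apply hne
    have := congrArg (fun (s : Finset E) => (s : Set E)) (e1.trans e2.symm)
    simpa using this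
  omega

noncomputable def pick {α : Type*} [Nonempty α] (C : Finset α) : α :=
  if h : C.Nonempty then h.choose else Classical.arbitrary α

lemma pick_mem {α : Type*} [Nonempty α] {C : Finset α} (h : C.Nonempty) : pick C ∈ C := by
  rw [pick, dif_pos h]
  exact h.choose_spec


noncomputable def T3 (P : Finset E) : Finset (E × E × E) :=
  (P ×ˢ P ×ˢ P).filter fun z =>
    z.2.1 ≠ z.2.2 ∧ z.1 ≠ z.2.1 ∧ z.1 ≠ z.2.2 ∧ dist z.1 z.2.1 = dist z.1 z.2.2

noncomputable def T4 (P : Finset E) : Finset (E × E × E × E) :=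
  (P ×ˢ P ×ˢ P ×ˢ P).filter fun z =>
    z.1 ≠ z.2.1 ∧ z.2.2.1 ≠ z.2.2.2 ∧ z.1 ≠ z.2.2.1 ∧ z.1 ≠ z.2.2.2 ∧
    z.2.1 ≠ z.2.2.1 ∧ z.2.1 ≠ z.2.2.2 ∧ dist z.1 z.2.1 = dist z.2.2.1 z.2.2.2

lemma card_T3_le {P : Finset E} {m : ℕ}
    (hs : ∀ p ∈ P, ∀ r : ℝ, 0 < r → (P.filter fun q => dist q p = r).card ≤ m) :
    (T3 P).card ≤ (m - 1) * (P.card * P.card) := by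
  have h := card_le_mul_card_image_of_maps_to
    (f := fun z : E × E × E => (z.1, z.2.1)) (s := T3 P) (t := P ×ˢ P)
    (fun z hz => by
      simp only [T3, mem_filter, mem_product] at hz
      simp [mem_product, hz.1.1, hz.1.2.1])
    (m - 1)
    (fun b hb => ?_)
  · calc (T3 P).card ≤ (m - 1) * (P ×ˢ P).card := h
      _ = (m - 1) * (P.card * P.card) := by rw [card_product]
  · obtain ⟨x, a⟩ := b
    simp only [mem_product] at hb
    rcases eq_or_ne x a with rfl | hxa
    · -- fiber is empty
      have : ({z ∈ T3 P | (z.1, z.2.1) = (x, x)} : Finset _) = ∅ := by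
        rw [Finset.eq_empty_iff_forall_notMem]
        intro z hz
        simp only [T3, mem_filter, Prod.mk.injEq] at hz
        exact hz.1.2.2.1 (by rw [hz.2.1, hz.2.2])
      rw [this]; simp
    · have hr : (0 : ℝ) < dist x a := dist_pos.2 hxa
      have hsub : {z ∈ T3 P | (z.1, z.2.1) = (x, a)}.card ≤
          ((P.filter fun c => dist c x = dist x a) \ {a}).card := by
        apply card_le_card_of_injOn (fun z => z.2.2)
        · intro z hz
          simp only [T3, mem_coe, mem_filter, Prod.mk.injEq, mem_product] at hz
          obtain ⟨⟨⟨hz1, hz2, hz3⟩, hne1, _, _, hdd⟩, he1, he2⟩ := hz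
          rw [mem_coe, mem_sdiff, mem_filter, mem_singleton]
          refine ⟨⟨hz3, ?_⟩, ?_⟩
          · rw [dist_comm, ← he1, ← he2]; exact hdd.symm
          · rw [← he2]; exact fun h => hne1 h.symm
        · intro z hz w hw hzw
          simp only [coe_filter, Set.mem_setOf_eq, Prod.mk.injEq] at hz hw
          obtain ⟨_, hz1, hz2⟩ := hz
          obtain ⟨_, hw1, hw2⟩ := hw
          exact Prod.ext (hz1.trans hw1.symm) (Prod.ext (hz2.trans hw2.symm) hzw)
      refine hsub.trans ?_
      have hmem : a ∈ P.filter fun c => dist c x = dist x a := by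
        simp [hb.2, dist_comm]
      calc ((P.filter fun c => dist c x = dist x a) \ {a}).card
          = (P.filter fun c => dist c x = dist x a).card - 1 := by
            rw [card_sdiff_of_subset (by simpa using hmem), card_singleton]
        _ ≤ m - 1 := Nat.sub_le_sub_right (hs x hb.1 _ hr) 1

lemma card_T4_le {P : Finset E} {m : ℕ}
    (hs : ∀ p ∈ P, ∀ r : ℝ, 0 < r → (P.filter fun q => dist q p = r).card ≤ m) :
    (T4 P).card ≤ m * (P.card * (P.card * P.card)) := by
  have h := card_le_mul_card_image_of_maps_to
    (f := fun z : E × E × E × E => (z.1, z.2.1, z.2.2.1)) (s := T4 P) (t := P ×ˢ P ×ˢ P)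
    (fun z hz => by
      simp only [T4, mem_filter, mem_product] at hz
      simp [mem_product, hz.1.1, hz.1.2.1, hz.1.2.2.1])
    m
    (fun b hb => ?_)
  · calc (T4 P).card ≤ m * (P ×ˢ P ×ˢ P).card := h
      _ = m * (P.card * (P.card * P.card)) := by rw [card_product, card_product]
  · obtain ⟨x, a, c⟩ := b
    simp only [mem_product] at hb
    rcases eq_or_ne x a with rfl | hxa
    · have : ({z ∈ T4 P | (z.1, z.2.1, z.2.2.1) = (x, x, c)} : Finset _) = ∅ := by
        rw [Finset.eq_empty_iff_forall_notMem]
        intro z hz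
        simp only [T4, mem_filter, Prod.mk.injEq] at hz
        exact hz.1.2.1 (by rw [hz.2.1, hz.2.2.1])
      rw [this]; simp
    · have hr : (0 : ℝ) < dist x a := dist_pos.2 hxa
      have hsub : {z ∈ T4 P | (z.1, z.2.1, z.2.2.1) = (x, a, c)}.card ≤
          (P.filter fun w => dist w c = dist x a).card := by
        apply card_le_card_of_injOn (fun z => z.2.2.2)
        · intro z hz
          simp only [T4, mem_coe, mem_filter, Prod.mk.injEq, mem_product] at hz
          obtain ⟨⟨⟨hz1, hz2, hz3, hz4⟩, hprop⟩, he1, he2, he3⟩ := hz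
          rw [mem_coe, mem_filter]
          refine ⟨hz4, ?_⟩
          rw [dist_comm, ← he3, ← he1, ← he2]
          exact hprop.2.2.2.2.2.2.symm
        · intro z hz w hw hzw
          simp only [coe_filter, Set.mem_setOf_eq, Prod.mk.injEq] at hz hw
          obtain ⟨_, hz1, hz2, hz3⟩ := hz
          obtain ⟨_, hw1, hw2, hw3⟩ := hw
          exact Prod.ext (hz1.trans hw1.symm)
            (Prod.ext (hz2.trans hw2.symm) (Prod.ext (hz3.trans hw3.symm) hzw))
      exact hsub.trans (hs c hb.2.2 _ hr)


lemma exists_T3_reps_aux {P : Finset E} {p q p' q' : E}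
    (hp : p ∈ P) (hq : q ∈ P) (hq' : q' ∈ P)
    (hpq : p ≠ q) (hpq' : p' ≠ q') (hd : dist p q = dist p' q')
    (hne : ({p, q} : Set E) ≠ ({p', q'} : Set E)) (hshare : p = p') :
    ∃ z ∈ T3 P, ∃ w ∈ T3 P, z ≠ w ∧
      ({z.1, z.2.1, z.2.2} : Finset E) = {p, q, p', q'} ∧
      ({w.1, w.2.1, w.2.2} : Finset E) = {p, q, p', q'} := by
  have mk : ∀ x a c : E, x ∈ P → a ∈ P → c ∈ P → a ≠ c → x ≠ a → x ≠ c →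
      dist x a = dist x c → (x, a, c) ∈ T3 P := by
    intro x a c h1 h2 h3 h4 h5 h6 h7
    simp [T3, mem_product, *]
  have hqq' : q ≠ q' := fun h => hne (by rw [hshare, h])
  have hpq2 : p ≠ q' := by rw [hshare]; exact hpq'
  have hd2 : dist p q = dist p q' := by rw [hd, ← hshare]
  have hset : ({p, q, q'} : Finset E) = {p, q, p', q'} := by
    rw [← hshare]; ext y; simp; tauto
  refine ⟨(p, q, q'), mk _ _ _ hp hq hq' hqq' hpq hpq2 hd2, (p, q', q),
    mk _ _ _ hp hq' hq hqq'.symm hpq2 hpq hd2.symm, ?_, hset, ?_⟩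
  · exact fun hzw => hqq' (congrArg (fun z => z.2.1) hzw)
  · rw [← hset]; ext y; simp; tauto

/-- every 3-element configuration has two distinct representatives in T3. -/
lemma exists_T3_reps {P : Finset E} {C : Finset E} (hC : C ∈ cfgs P) (h3 : C.card = 3) :
    ∃ z ∈ T3 P, ∃ w ∈ T3 P, z ≠ w ∧
      ({z.1, z.2.1, z.2.2} : Finset E) = C ∧ ({w.1, w.2.1, w.2.2} : Finset E) = C := by
  rw [cfgs, mem_filter, mem_powerset] at hC
  obtain ⟨hCP, p, q, p', q', hpq, hpq', hd, hne, rfl⟩ := hC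
  have hp : p ∈ P := hCP (by simp)
  have hq : q ∈ P := hCP (by simp)
  have hp' : p' ∈ P := hCP (by simp)
  have hq' : q' ∈ P := hCP (by simp)
  have hco : p = p' ∨ p = q' ∨ q = p' ∨ q = q' := by
    by_contra h
    push_neg at h
    obtain ⟨h1, h2, h3', h4⟩ := h
    have : ({p, q, p', q'} : Finset E).card = 4 := by
      rw [card_insert_of_notMem (by simp [hpq, h1, h2]),
        card_insert_of_notMem (by simp [h3', h4]), card_pair hpq']
    omega
  have hperm : ∀ a b c d : E, ({a, b, c, d} : Finset E) = {p, q, p', q'} →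
      (∃ z ∈ T3 P, ∃ w ∈ T3 P, z ≠ w ∧
        ({z.1, z.2.1, z.2.2} : Finset E) = {a, b, c, d} ∧
        ({w.1, w.2.1, w.2.2} : Finset E) = {a, b, c, d}) →
      ∃ z ∈ T3 P, ∃ w ∈ T3 P, z ≠ w ∧
        ({z.1, z.2.1, z.2.2} : Finset E) = {p, q, p', q'} ∧
        ({w.1, w.2.1, w.2.2} : Finset E) = {p, q, p', q'} := by
    intro a b c d heq ⟨z, hz, w, hw, hzw, h1, h2⟩
    exact ⟨z, hz, w, hw, hzw, h1.trans heq, h2.trans heq⟩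
  rcases hco with hco | hco | hco | hco
  · exact exists_T3_reps_aux hp hq hq' hpq hpq' hd hne hco
  · refine hperm p q q' p' (by ext y; simp; tauto) ?_
    exact exists_T3_reps_aux hp hq hp' hpq hpq'.symm
      (hd.trans (dist_comm p' q')) (fun h => hne (h.trans (Set.pair_comm q' p'))) hco
  · refine hperm q p p' q' (by ext y; simp; tauto) ?_
    exact exists_T3_reps_aux hq hp hq' hpq.symm hpq'
      ((dist_comm q p).trans hd) (fun h => hne ((Set.pair_comm p q).trans h)) hco
  · refine hperm q p q' p' (by ext y; simp; tauto) ?_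
    exact exists_T3_reps_aux hq hp hp' hpq.symm hpq'.symm
      ((dist_comm q p).trans (hd.trans (dist_comm p' q')))
      (fun h => hne (((Set.pair_comm p q).trans h).trans (Set.pair_comm q' p'))) hco

lemma two_mul_card_cfg3_le {P : Finset E} :
    2 * ((cfgs P).filter fun C => C.card = 3).card ≤ (T3 P).card := by
  set g : E × E × E → Finset E := fun z => {z.1, z.2.1, z.2.2} with hg
  set s : Finset (E × E × E) :=
    (T3 P).filter (fun z => g z ∈ (cfgs P).filter fun C => C.card = 3) with hsdef
  have h := mul_card_image_le_card_of_maps_to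
    (f := g) (s := s) (t := (cfgs P).filter fun C => C.card = 3)
    (fun z hz => (mem_filter.1 hz).2) 2 ?_
  · refine le_trans h (card_le_card (filter_subset _ _))
  · intro C hC
    have hC' := hC
    rw [mem_filter] at hC'
    obtain ⟨z, hz, w, hw, hzw, hgz, hgw⟩ := exists_T3_reps hC'.1 hC'.2
    refine Finset.one_lt_card.2 ⟨z, ?_, w, ?_, hzw⟩ <;> rw [mem_filter, hsdef, mem_filter]
    · exact ⟨⟨hz, by simpa [hg, hgz] using hC⟩, by simpa [hg] using hgz⟩
    · exact ⟨⟨hw, by simpa [hg, hgw] using hC⟩, by simpa [hg] using hgw⟩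


def g4 : E × E × E × E → Finset E := fun z => {z.1, z.2.1, z.2.2.1, z.2.2.2}

lemma exists_T4_reps {P : Finset E} {C : Finset E} (hC : C ∈ cfgs P) (h4 : C.card = 4) :
    ∃ f : Fin 8 → E × E × E × E, (∀ i, f i ∈ T4 P ∧ g4 (f i) = C) ∧ Function.Injective f := by
  rw [cfgs, mem_filter, mem_powerset] at hC
  obtain ⟨hCP, p, q, p', q', hpq, hpq', hd, hne, rfl⟩ := hC
  have hp : p ∈ P := hCP (by simp)
  have hq : q ∈ P := hCP (by simp)
  have hp' : p' ∈ P := hCP (by simp)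
  have hq' : q' ∈ P := hCP (by simp)
  have hpp' : p ≠ p' := by
    rintro rfl
    have h1 := card_le_card (show ({p, q, p, q'} : Finset E) ⊆ {p, q, q'} by
      intro y hy; simp at hy ⊢; tauto)
    have h2 := card_triple_le p q q'
    omega
  have hpq2 : p ≠ q' := by
    rintro rfl
    have h1 := card_le_card (show ({p, q, p', p} : Finset E) ⊆ {p, q, p'} by
      intro y hy; simp at hy ⊢; tauto)
    have h2 := card_triple_le p q p'
    omega
  have hqp' : q ≠ p' := by
    rintro rfl
    have h1 := card_le_card (show ({p, q, q, q'} : Finset E) ⊆ {p, q, q'} by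
      intro y hy; simp at hy ⊢; tauto)
    have h2 := card_triple_le p q q'
    omega
  have hqq' : q ≠ q' := by
    rintro rfl
    have h1 := card_le_card (show ({p, q, p', q} : Finset E) ⊆ {p, q, p'} by
      intro y hy; simp at hy ⊢; tauto)
    have h2 := card_triple_le p q p'
    omega
  have mk : ∀ a b c d : E, a ∈ P → b ∈ P → c ∈ P → d ∈ P →
      a ≠ b → c ≠ d → a ≠ c → a ≠ d → b ≠ c → b ≠ d →
      dist a b = dist c d → (a, b, c, d) ∈ T4 P := by
    intro a b c d h1 h2 h3 h4 h5 h6 h7 h8 h9 h10 h11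
    simp [T4, mem_product, *]
  refine ⟨![(p, q, p', q'), (q, p, p', q'), (p, q, q', p'), (q, p, q', p'),
    (p', q', p, q), (q', p', p, q), (p', q', q, p), (q', p', q, p)], ?_, ?_⟩
  · intro i
    fin_cases i <;> refine ⟨?_, ?_⟩
    · exact mk _ _ _ _ hp hq hp' hq' hpq hpq' hpp' hpq2 hqp' hqq' hd
    · show ({p, q, p', q'} : Finset E) = _; rfl
    · exact mk _ _ _ _ hq hp hp' hq' hpq.symm hpq' hqp' hqq' hpp' hpq2
        ((dist_comm q p).trans hd)
    · show ({q, p, p', q'} : Finset E) = _; ext y; simp; tauto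
    · exact mk _ _ _ _ hp hq hq' hp' hpq hpq'.symm hpq2 hpp' hqq' hqp'
        (hd.trans (dist_comm p' q'))
    · show ({p, q, q', p'} : Finset E) = _; ext y; simp; tauto
    · exact mk _ _ _ _ hq hp hq' hp' hpq.symm hpq'.symm hqq' hqp' hpq2 hpp'
        ((dist_comm q p).trans (hd.trans (dist_comm p' q')))
    · show ({q, p, q', p'} : Finset E) = _; ext y; simp; tauto
    · exact mk _ _ _ _ hp' hq' hp hq hpq' hpq hpp'.symm hqp'.symm hpq2.symm hqq'.symm hd.symm
    · show ({p', q', p, q} : Finset E) = _; ext y; simp; tauto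
    · exact mk _ _ _ _ hq' hp' hp hq hpq'.symm hpq hpq2.symm hqq'.symm hpp'.symm hqp'.symm
        ((dist_comm q' p').trans hd.symm)
    · show ({q', p', p, q} : Finset E) = _; ext y; simp; tauto
    · exact mk _ _ _ _ hp' hq' hq hp hpq' hpq.symm hqp'.symm hpp'.symm hqq'.symm hpq2.symm
        (hd.symm.trans (dist_comm p q))
    · show ({p', q', q, p} : Finset E) = _; ext y; simp; tauto
    · exact mk _ _ _ _ hq' hp' hq hp hpq'.symm hpq.symm hqq'.symm hpq2.symm hqp'.symm hpp'.symm
        ((dist_comm q' p').trans (hd.symm.trans (dist_comm p q)))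
    · show ({q', p', q, p} : Finset E) = _; ext y; simp; tauto
  · intro i j hij
    fin_cases i <;> fin_cases j <;>
      first
        | rfl
        | (exfalso; simp [Prod.ext_iff] at hij; tauto)

lemma eight_mul_card_cfg4_le {P : Finset E} :
    8 * ((cfgs P).filter fun C => C.card = 4).card ≤ (T4 P).card := by
  set s : Finset (E × E × E × E) :=
    (T4 P).filter (fun z => g4 z ∈ (cfgs P).filter fun C => C.card = 4) with hsdef
  have h := mul_card_image_le_card_of_maps_to
    (f := g4) (s := s) (t := (cfgs P).filter fun C => C.card = 4)
    (fun z hz => (mem_filter.1 hz).2) 8 ?_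
  · exact le_trans h (card_le_card (filter_subset _ _))
  · intro C hC
    have hC' := hC
    rw [mem_filter] at hC'
    obtain ⟨f, hf, hinj⟩ := exists_T4_reps hC'.1 hC'.2
    calc (8 : ℕ) = (Finset.univ : Finset (Fin 8)).card := by simp
      _ ≤ _ := by
          apply card_le_card_of_injOn f
          · intro i _
            rw [mem_coe, mem_filter, hsdef, mem_filter]
            exact ⟨⟨(hf i).1, by rw [(hf i).2]; exact hC⟩, (hf i).2⟩
          · intro i _ j _ hij
            exact hinj hij


/-- number of k-subsets of P containing a fixed subset C -/
lemma count_supersets {α : Type*} [DecidableEq α] {P C : Finset α} {k : ℕ} (hCP : C ⊆ P) (hck : C.card ≤ k) :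
    ((P.powersetCard k).filter fun R => C ⊆ R).card
      = (P.card - C.card).choose (k - C.card) := by
  rw [← Finset.card_sdiff_of_subset hCP, ← Finset.card_powersetCard]
  apply card_nbij' (fun R => R \ C) (fun R => R ∪ C)
  · intro R hR
    rw [mem_coe, mem_filter, mem_powersetCard] at hR
    obtain ⟨⟨hRP, hRk⟩, hCR⟩ := hR
    rw [mem_coe, mem_powersetCard]
    constructor
    · exact sdiff_subset_sdiff hRP Subset.rfl
    · rw [card_sdiff_of_subset hCR, hRk]
  · intro R hR
    rw [mem_coe, mem_powersetCard] at hR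
    obtain ⟨hRP, hRc⟩ := hR
    have hdisj : Disjoint R C := by
      refine disjoint_left.2 fun a ha hac => ?_
      exact (mem_sdiff.1 (hRP ha)).2 hac
    rw [mem_coe, mem_filter, mem_powersetCard]
    refine ⟨⟨union_subset (fun a ha => (mem_sdiff.1 (hRP ha)).1) hCP, ?_⟩, subset_union_right⟩
    rw [card_union_of_disjoint hdisj, hRc]
    omega
  · intro R hR
    rw [mem_coe, mem_filter] at hR
    exact sdiff_union_of_subset hR.2
  · intro R hR
    rw [mem_coe, mem_powersetCard] at hR
    have hdisj : Disjoint R C := by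
      refine disjoint_left.2 fun a ha hac => ?_
      exact (mem_sdiff.1 (hR.1 ha)).2 hac
    show (R ∪ C) \ C = R
    rw [union_sdiff_right, sdiff_eq_self_of_disjoint hdisj]

/-- double counting: summing the number of sub-configurations over all k-subsets -/
lemma sum_filter_card_eq {α : Type*} [DecidableEq α] {P : Finset α} {k : ℕ} (F : Finset (Finset α)) :
    ∑ R ∈ P.powersetCard k, ((F.filter fun C => C ⊆ R).card)
      = ∑ C ∈ F, ((P.powersetCard k).filter fun R => C ⊆ R).card := by
  simp_rw [card_filter]
  rw [Finset.sum_comm]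




/-- the key arithmetic inequality -/
lemma master (m t n : ℕ) (hm : 1 ≤ m) (ht : 2 ≤ t) (hn : 4 * m * t ^ 3 ≤ n) :
    8 * ((m - 1) * (n * n)) * ((2 * t) ^ 3 * (n * ((n - 1) * ((n - 2) * (n - 3)))))
      + 2 * (m * (n * (n * n))) * ((2 * t) ^ 4 * (n * ((n - 1) * (n - 2))))
      ≤ 16 * t * ((n * ((n - 1) * (n - 2))) * (n * ((n - 1) * ((n - 2) * (n - 3))))) := by
  obtain ⟨a, rfl⟩ : ∃ a, m = a + 1 := ⟨m - 1, by omega⟩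
  simp only [Nat.add_sub_cancel]
  have h8 : (2 : ℕ) ^ 3 ≤ t ^ 3 := Nat.pow_le_pow_left ht 3
  have hn32 : 32 ≤ n := by
    refine le_trans ?_ hn
    have : 4 * 1 * 2 ^ 3 ≤ 4 * (a + 1) * t ^ 3 :=
      Nat.mul_le_mul (Nat.mul_le_mul (le_refl 4) (by omega)) h8
    simpa using this
  have ht2 : 2 * t ^ 2 ≤ t ^ 3 := by
    calc 2 * t ^ 2 ≤ t * t ^ 2 := Nat.mul_le_mul_right _ ht
      _ = t ^ 3 := by ring
  -- the core inequality
  have core : 4 * a * t ^ 2 * (n * n * (n - 3)) + 2 * (a + 1) * t ^ 3 * (n * n * n)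
      ≤ n * ((n - 1) * ((n - 2) * (n - 3))) := by
    have h1 : n * n * (n - 3) ≤ n * n * n := Nat.mul_le_mul_left _ (by omega)
    have step1 : 4 * a * t ^ 2 * (n * n * (n - 3)) + 2 * (a + 1) * t ^ 3 * (n * n * n)
        ≤ (4 * a * t ^ 2 + 2 * (a + 1) * t ^ 3) * (n * n * n) := by
      calc 4 * a * t ^ 2 * (n * n * (n - 3)) + 2 * (a + 1) * t ^ 3 * (n * n * n)
          ≤ 4 * a * t ^ 2 * (n * n * n) + 2 * (a + 1) * t ^ 3 * (n * n * n) :=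
            Nat.add_le_add_right (Nat.mul_le_mul_left _ h1) _
        _ = (4 * a * t ^ 2 + 2 * (a + 1) * t ^ 3) * (n * n * n) := by ring
    have step2 : 4 * a * t ^ 2 + 2 * (a + 1) * t ^ 3 + 4 * t ^ 2 ≤ 4 * (a + 1) * t ^ 3 := by
      calc 4 * a * t ^ 2 + 2 * (a + 1) * t ^ 3 + 4 * t ^ 2
          = 2 * (a + 1) * (2 * t ^ 2) + 2 * (a + 1) * t ^ 3 := by ring
        _ ≤ 2 * (a + 1) * t ^ 3 + 2 * (a + 1) * t ^ 3 :=
            Nat.add_le_add_right (Nat.mul_le_mul_left _ ht2) _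
        _ = 4 * (a + 1) * t ^ 3 := by ring
    have h16 : 16 ≤ 4 * t ^ 2 := by
      have h4 : (2 : ℕ) ^ 2 ≤ t ^ 2 := Nat.pow_le_pow_left ht 2
      calc (16 : ℕ) = 4 * 2 ^ 2 := by norm_num
        _ ≤ 4 * t ^ 2 := Nat.mul_le_mul_left _ h4
    have step3 : (4 * a * t ^ 2 + 2 * (a + 1) * t ^ 3) * (n * n * n) + 16 * (n * n * n)
        ≤ n * (n * n * n) := by
      calc (4 * a * t ^ 2 + 2 * (a + 1) * t ^ 3) * (n * n * n) + 16 * (n * n * n)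
          ≤ (4 * a * t ^ 2 + 2 * (a + 1) * t ^ 3) * (n * n * n) + (4 * t ^ 2) * (n * n * n) :=
            Nat.add_le_add_left (Nat.mul_le_mul_right _ h16) _
        _ = (4 * a * t ^ 2 + 2 * (a + 1) * t ^ 3 + 4 * t ^ 2) * (n * n * n) := by ring
        _ ≤ (4 * (a + 1) * t ^ 3) * (n * n * n) := Nat.mul_le_mul_right _ step2
        _ ≤ n * (n * n * n) := Nat.mul_le_mul_right _ hn
    have step4 : n * (n * n * n) ≤ n * ((n - 1) * ((n - 2) * (n - 3))) + 16 * (n * n * n) := by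
      have core2 : n * n * n ≤ (n - 1) * ((n - 2) * (n - 3)) + 16 * (n * n) := by
        obtain ⟨b, rfl⟩ : ∃ b, n = b + 32 := ⟨n - 32, by omega⟩
        have e1 : b + 32 - 1 = b + 31 := by omega
        have e2 : b + 32 - 2 = b + 30 := by omega
        have e3 : b + 32 - 3 = b + 29 := by omega
        rw [e1, e2, e3]
        nlinarith [b.zero_le]
      calc n * (n * n * n)
          ≤ n * ((n - 1) * ((n - 2) * (n - 3)) + 16 * (n * n)) := by
            exact Nat.mul_le_mul_left _ core2
        _ = n * ((n - 1) * ((n - 2) * (n - 3))) + 16 * (n * n * n) := by ring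
    have hcomb := le_trans (Nat.add_le_add_right step1 (16 * (n * n * n)))
      (le_trans step3 step4)
    omega
  -- scale the core inequality up
  calc 8 * (a * (n * n)) * ((2 * t) ^ 3 * (n * ((n - 1) * ((n - 2) * (n - 3)))))
        + 2 * ((a + 1) * (n * (n * n))) * ((2 * t) ^ 4 * (n * ((n - 1) * (n - 2))))
      = 16 * t * (n * ((n - 1) * (n - 2)))
          * (4 * a * t ^ 2 * (n * n * (n - 3)) + 2 * (a + 1) * t ^ 3 * (n * n * n)) := by
        ring
    _ ≤ 16 * t * (n * ((n - 1) * (n - 2))) * (n * ((n - 1) * ((n - 2) * (n - 3)))) :=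
        Nat.mul_le_mul_left _ core
    _ = 16 * t * ((n * ((n - 1) * (n - 2))) * (n * ((n - 1) * ((n - 2) * (n - 3))))) := by
        ring


lemma exists_rainbow [Nonempty E] {P : Finset E} {m t : ℕ} (hm : 1 ≤ m) (ht : 2 ≤ t)
    (hn : 4 * m * t ^ 3 ≤ P.card)
    (hs : ∀ p ∈ P, ∀ r : ℝ, 0 < r → (P.filter fun q => dist q p = r).card ≤ m) :
    ∃ S : Finset E, S ⊆ P ∧ t ≤ S.card ∧
      ∀ p ∈ S, ∀ q ∈ S, ∀ p' ∈ S, ∀ q' ∈ S, p ≠ q → p' ≠ q' →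
        dist p q = dist p' q' → ({p, q} : Set E) = {p', q'} := by
  set n := P.card with hndef
  set k := 2 * t with hkdef
  have ht3 : t ≤ t ^ 3 := Nat.le_self_pow (by norm_num) t
  have hkn : k ≤ n := by
    calc k = 2 * t := rfl
      _ ≤ 4 * (1 * t ^ 3) := by omega
      _ = 4 * 1 * t ^ 3 := by ring
      _ ≤ 4 * m * t ^ 3 := by
          apply Nat.mul_le_mul_right
          omega
      _ ≤ n := hn
  have hn32 : 32 ≤ n := by
    refine le_trans ?_ hn
    have h8 : (2 : ℕ) ^ 3 ≤ t ^ 3 := Nat.pow_le_pow_left ht 3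
    have : 4 * 1 * 2 ^ 3 ≤ 4 * m * t ^ 3 :=
      Nat.mul_le_mul (Nat.mul_le_mul (le_refl 4) hm) h8
    simpa using this
  -- abbreviations
  set N3 := ((cfgs P).filter fun C => C.card = 3).card with hN3def
  set N4 := ((cfgs P).filter fun C => C.card = 4).card with hN4def
  set c3 := (n - 3).choose (k - 3) with hc3def
  set c4 := (n - 4).choose (k - 4) with hc4def
  set K := n.choose k with hKdef
  set D3 := n.choose 3 with hD3def
  set D4 := n.choose 4 with hD4def
  -- Step 1: the total count of configurations over all k-subsets
  have hsum : ∑ R ∈ P.powersetCard k, (cfgs R).card = N3 * c3 + N4 * c4 := by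
    have h1 : ∀ R ∈ P.powersetCard k, (cfgs R).card
        = ((cfgs P).filter fun C => C ⊆ R).card := by
      intro R hR
      rw [mem_powersetCard] at hR
      congr 1
      ext C
      simp only [mem_cfgs, mem_filter]
      constructor
      · rintro ⟨h1, h2⟩; exact ⟨⟨h1.trans hR.1, h2⟩, h1⟩
      · rintro ⟨⟨_, h2⟩, h3⟩; exact ⟨h3, h2⟩
    rw [Finset.sum_congr rfl h1, sum_filter_card_eq]
    have h2 : ∀ C ∈ cfgs P, ((P.powersetCard k).filter fun R => C ⊆ R).card
        = (n - C.card).choose (k - C.card) := by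
      intro C hC
      rw [mem_cfgs] at hC
      have hcard := isCfg_card hC.2
      exact count_supersets hC.1 (by omega)
    rw [Finset.sum_congr rfl h2,
      ← Finset.sum_filter_add_sum_filter_not (cfgs P) (fun C => C.card = 3)]
    have h3 : ∑ C ∈ (cfgs P).filter (fun C => C.card = 3),
        (n - C.card).choose (k - C.card) = N3 * c3 := by
      rw [Finset.sum_congr rfl (fun C hC => ?_), Finset.sum_const, smul_eq_mul]
      rw [mem_filter] at hC
      rw [hC.2]
    have h4 : ∑ C ∈ (cfgs P).filter (fun C => ¬ C.card = 3),
        (n - C.card).choose (k - C.card) = N4 * c4 := by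
      have hfeq : (cfgs P).filter (fun C => ¬ C.card = 3)
          = (cfgs P).filter (fun C => C.card = 4) := by
        apply Finset.filter_congr
        intro C hC
        have := isCfg_card (mem_cfgs.1 hC).2
        constructor
        · intro h; omega
        · intro h; omega
      rw [hfeq]
      rw [Finset.sum_congr rfl (fun C hC => ?_), Finset.sum_const, smul_eq_mul]
      rw [mem_filter] at hC
      rw [hC.2]
    rw [h3, h4]
  -- Step 2: numeric bound on the total
  have hb3 : 2 * N3 ≤ (m - 1) * (n * n) := le_trans two_mul_card_cfg3_le (card_T3_le hs)
  have hb4 : 8 * N4 ≤ m * (n * (n * n)) := le_trans eight_mul_card_cfg4_le (card_T4_le hs)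
  have ek3 : 6 * k.choose 3 = k.descFactorial 3 := by
    rw [Nat.descFactorial_eq_factorial_mul_choose]; norm_num [Nat.factorial]
  have ek4 : 24 * k.choose 4 = k.descFactorial 4 := by
    rw [Nat.descFactorial_eq_factorial_mul_choose]; norm_num [Nat.factorial]
  have edF3 : n.descFactorial 3 = n * ((n - 1) * (n - 2)) := by
    simp [Nat.descFactorial]
    ring
  have edF4 : n.descFactorial 4 = n * ((n - 1) * ((n - 2) * (n - 3))) := by
    simp [Nat.descFactorial]
    ring
  have en3 : 6 * D3 = n * ((n - 1) * (n - 2)) := by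
    rw [hD3def, ← edF3, Nat.descFactorial_eq_factorial_mul_choose]; norm_num [Nat.factorial]
  have en4 : 24 * D4 = n * ((n - 1) * ((n - 2) * (n - 3))) := by
    rw [hD4def, ← edF4, Nat.descFactorial_eq_factorial_mul_choose]; norm_num [Nat.factorial]
  have bk3 : k.descFactorial 3 ≤ (2 * t) ^ 3 := Nat.descFactorial_le_pow _ _
  have bk4 : k.descFactorial 4 ≤ (2 * t) ^ 4 := Nat.descFactorial_le_pow _ _
  have key : N3 * k.choose 3 * D4 + N4 * k.choose 4 * D3 ≤ t * (D3 * D4) := by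
    have term1 : (2 * N3) * ((6 * k.choose 3) * (24 * D4))
        ≤ ((m - 1) * (n * n)) * ((2 * t) ^ 3 * (n * ((n - 1) * ((n - 2) * (n - 3))))) := by
      rw [ek3, en4]
      exact Nat.mul_le_mul hb3 (Nat.mul_le_mul bk3 (le_refl _))
    have term2 : (8 * N4) * ((24 * k.choose 4) * (6 * D3))
        ≤ (m * (n * (n * n))) * ((2 * t) ^ 4 * (n * ((n - 1) * (n - 2)))) := by
      rw [ek4, en3]
      exact Nat.mul_le_mul hb4 (Nat.mul_le_mul bk4 (le_refl _))
    have h2304 : 2304 * (N3 * k.choose 3 * D4 + N4 * k.choose 4 * D3)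
        ≤ 2304 * (t * (D3 * D4)) := by
      calc 2304 * (N3 * k.choose 3 * D4 + N4 * k.choose 4 * D3)
          = 8 * ((2 * N3) * ((6 * k.choose 3) * (24 * D4)))
            + 2 * ((8 * N4) * ((24 * k.choose 4) * (6 * D3))) := by ring
        _ ≤ 8 * (((m - 1) * (n * n)) * ((2 * t) ^ 3 * (n * ((n - 1) * ((n - 2) * (n - 3))))))
            + 2 * ((m * (n * (n * n))) * ((2 * t) ^ 4 * (n * ((n - 1) * (n - 2))))) :=
            Nat.add_le_add (Nat.mul_le_mul_left _ term1) (Nat.mul_le_mul_left _ term2)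
        _ = 8 * ((m - 1) * (n * n)) * ((2 * t) ^ 3 * (n * ((n - 1) * ((n - 2) * (n - 3)))))
            + 2 * (m * (n * (n * n))) * ((2 * t) ^ 4 * (n * ((n - 1) * (n - 2)))) := by ring
        _ ≤ 16 * t * ((n * ((n - 1) * (n - 2))) * (n * ((n - 1) * ((n - 2) * (n - 3))))) :=
            master m t n hm ht hn
        _ = 16 * t * ((6 * D3) * (24 * D4)) := by rw [en3, en4]
        _ = 2304 * (t * (D3 * D4)) := by ring
    exact Nat.le_of_mul_le_mul_left h2304 (by norm_num)
  have I3 : K * k.choose 3 = D3 * c3 := Nat.choose_mul (by omega)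
  have I4 : K * k.choose 4 = D4 * c4 := Nat.choose_mul (by omega)
  have hD3pos : 0 < D3 := Nat.choose_pos (by omega)
  have hD4pos : 0 < D4 := Nat.choose_pos (by omega)
  have htotal : N3 * c3 + N4 * c4 ≤ t * K := by
    refine Nat.le_of_mul_le_mul_right ?_ (Nat.mul_pos hD3pos hD4pos)
    calc (N3 * c3 + N4 * c4) * (D3 * D4)
        = N3 * (D3 * c3) * D4 + N4 * (D4 * c4) * D3 := by ring
      _ = N3 * (K * k.choose 3) * D4 + N4 * (K * k.choose 4) * D3 := by rw [I3, I4]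
      _ = K * (N3 * k.choose 3 * D4 + N4 * k.choose 4 * D3) := by ring
      _ ≤ K * (t * (D3 * D4)) := Nat.mul_le_mul_left _ key
      _ = t * K * (D3 * D4) := by ring
  -- Step 3: pigeonhole, find a good k-subset R
  have hexR : ∃ R ∈ P.powersetCard k, (cfgs R).card ≤ t := by
    by_contra h
    push_neg at h
    have hKpos : 0 < K := Nat.choose_pos hkn
    have hgt : K * (t + 1) ≤ ∑ R ∈ P.powersetCard k, (cfgs R).card := by
      calc K * (t + 1) = ∑ _R ∈ P.powersetCard k, (t + 1) := by
            rw [Finset.sum_const, smul_eq_mul, card_powersetCard]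
        _ ≤ ∑ R ∈ P.powersetCard k, (cfgs R).card :=
            Finset.sum_le_sum (fun R hR => h R hR)
    rw [hsum] at hgt
    have : K * (t + 1) ≤ K * t := by
      calc K * (t + 1) ≤ t * K := le_trans hgt htotal
        _ = K * t := by ring
    have := Nat.le_of_mul_le_mul_left this hKpos
    omega
  obtain ⟨R, hRmem, hRt⟩ := hexR
  rw [mem_powersetCard] at hRmem
  obtain ⟨hRP, hRcard⟩ := hRmem
  -- Step 4: delete one point of each configuration
  set S := R \ (cfgs R).image pick with hSdef
  have hSR : S ⊆ R := sdiff_subset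
  refine ⟨S, hSR.trans hRP, ?_, ?_⟩
  · have h1 : ((cfgs R).image pick).card ≤ t := le_trans (card_image_le) hRt
    have h2 : R.card - ((cfgs R).image pick).card ≤ S.card :=
      le_card_sdiff ((cfgs R).image pick) R
    rw [hRcard] at h2
    omega
  · intro p hp q hq p' hp' q' hq' hpq hpq' hdist
    by_contra hne
    have hC : IsCfg ({p, q, p', q'} : Finset E) := ⟨p, q, p', q', hpq, hpq', hdist, hne, rfl⟩
    have hsubS : ({p, q, p', q'} : Finset E) ⊆ S := by
      intro x hx
      simp only [mem_insert, mem_singleton] at hx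
      rcases hx with rfl | rfl | rfl | rfl <;> assumption
    have hCR : ({p, q, p', q'} : Finset E) ∈ cfgs R := mem_cfgs.2 ⟨hsubS.trans hSR, hC⟩
    have hCne : ({p, q, p', q'} : Finset E).Nonempty := ⟨p, by simp⟩
    have hpkS : pick ({p, q, p', q'} : Finset E) ∈ S := hsubS (pick_mem hCne)
    rw [hSdef, mem_sdiff] at hpkS
    exact hpkS.2 (mem_image_of_mem pick hCR)

end Stmt7Aux

theorem stmt_7 (d m t n : ℕ) (hd : 2 ≤ d) (hm : 1 ≤ m) (ht : 1 ≤ t)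
    (P : Finset (EuclideanSpace ℝ (Fin d))) (hP : P.card = n)
    (hn : 4 * m * t ^ 3 ≤ n)
    (hsphere : ∀ p ∈ P, ∀ r : ℝ, 0 < r →
      {q : EuclideanSpace ℝ (Fin d) | q ∈ (P : Set (EuclideanSpace ℝ (Fin d))) ∧
        ‖q - p‖ = r}.ncard ≤ m) :
    ∃ S ⊆ P, t ≤ S.card ∧
      ∀ p ∈ S, ∀ q ∈ S, ∀ p' ∈ S, ∀ q' ∈ S,
        p ≠ q → p' ≠ q' → dist p q = dist p' q' →
          ({p, q} : Set (EuclideanSpace ℝ (Fin d))) = {p', q'} := by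
  classical
  subst hP
  have hs : ∀ p ∈ P, ∀ r : ℝ, 0 < r →
      (P.filter fun q => dist q p = r).card ≤ m := by
    intro p hp r hr
    have h := hsphere p hp r hr
    have heq : {q : EuclideanSpace ℝ (Fin d) | q ∈ (P : Set (EuclideanSpace ℝ (Fin d))) ∧
        ‖q - p‖ = r} = ↑(P.filter fun q => dist q p = r) := by
      ext q
      simp [dist_eq_norm]
    rw [heq, Set.ncard_coe_finset] at h
    exact h
  rcases Nat.lt_or_ge t 2 with ht1 | ht2
  · -- t = 1
    have ht1' : t = 1 := by omega
    have hPne : P.Nonempty := by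
      rw [← Finset.card_pos]
      have : 4 * m * t ^ 3 ≥ 1 := by
        have : 1 * 1 * 1 ≤ 4 * m * t ^ 3 :=
          Nat.mul_le_mul (Nat.mul_le_mul (by omega) hm) (Nat.one_le_pow _ _ (by omega))
        omega
      omega
    obtain ⟨x, hx⟩ := hPne
    refine ⟨{x}, by simpa using hx, by simp [ht1'], ?_⟩
    intro p hp q hq p' hp' q' hq' hpq hpq' _
    simp only [Finset.mem_singleton] at hp hq
    exact absurd (hp.trans hq.symm) hpq
  · obtain ⟨S, hSP, hSt, hrb⟩ := Stmt7Aux.exists_rainbow hm ht2 hn hs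
    exact ⟨S, hSP, hSt, hrb⟩
end

section
/- Let d ≥ 2 and t ≥ d+1 be integers, and let P be a set of n ≥ 8·t^(2d+2) points in ℝ^d. Then there exists a subset S ⊆ P with |S| ≥ t such that the function assigning to each (d+1)-element subset of S the volume of the simplex it spans is injective on those (d+1)-element subsets with nonzero volume. -/
/-- The `(d)`-dimensional volume of the simplex spanned by a set `s` of `d+1` points
in `ℝ^d`: `|det(p₁ - p₀, …, p_d - p₀)| / d!` for any enumeration of `s`
(the value does not depend on the enumeration; if `s` does not have exactly `d+1`
points the defining set is empty and the value is `0`). -/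
noncomputable def simplexVolume {d : ℕ} (s : Finset (EuclideanSpace ℝ (Fin d))) : ℝ :=
  sSup {v : ℝ | ∃ f : Fin (d + 1) → EuclideanSpace ℝ (Fin d),
    Set.range f = ↑s ∧
    v = |Matrix.det (Matrix.of fun i j : Fin d => (f i.succ - f 0) j)| /
          (Nat.factorial d)}



noncomputable def detAff {d : ℕ} (f : Fin (d + 1) → EuclideanSpace ℝ (Fin d)) : ℝ :=
  (Matrix.of fun i j : Fin d => (f i.succ - f 0) j).det

noncomputable def Nmat {d : ℕ} (f : Fin (d + 1) → EuclideanSpace ℝ (Fin d)) :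
    Matrix (Fin (d + 1)) (Fin (d + 1)) ℝ :=
  Matrix.of fun i j => Fin.cons (α := fun _ => ℝ) (1 : ℝ) (fun j' => f i j') j

noncomputable def Bmat {d : ℕ} (f : Fin (d + 1) → EuclideanSpace ℝ (Fin d)) :
    Matrix (Fin (d + 1)) (Fin (d + 1)) ℝ :=
  Matrix.of (Fin.cons (Fin.cons (1 : ℝ) (fun j' => f 0 j'))
    (fun i' => Fin.cons (0 : ℝ) (fun j' => (f i'.succ - f 0) j')))

theorem det_Nmat {d : ℕ} (f : Fin (d + 1) → EuclideanSpace ℝ (Fin d)) :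
    (Nmat f).det = detAff f := by
  have h1 : (Nmat f).det = (Bmat f).det := by
    apply Matrix.det_eq_of_forall_row_eq_smul_add_const
      (fun i => if i = 0 then (0 : ℝ) else 1) 0 (if_pos rfl)
    intro i j
    refine Fin.cases ?_ (fun i' => ?_) i
    · simp [Nmat, Bmat]
    · refine Fin.cases ?_ (fun j' => ?_) j
      · simp [Nmat, Bmat, Fin.succ_ne_zero]
      · simp [Nmat, Bmat, Fin.succ_ne_zero, PiLp.sub_apply]
  rw [h1]
  rw [Matrix.det_succ_column_zero]
  rw [Finset.sum_eq_single 0]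
  · simp [Bmat, detAff, Fin.succAbove_zero]
    congr 1
  · intro i _ hi
    obtain ⟨i', rfl⟩ := Fin.eq_succ_of_ne_zero hi
    simp [Bmat]
  · simp


theorem abs_detAff_comp {d : ℕ} (f : Fin (d + 1) → EuclideanSpace ℝ (Fin d))
    (σ : Equiv.Perm (Fin (d + 1))) : |detAff (f ∘ σ)| = |detAff f| := by
  have h2 : Nmat (f ∘ σ) = (Nmat f).submatrix σ id := by
    ext i j; rfl
  have h3 := Matrix.det_permute σ (Nmat f)
  rw [← det_Nmat f, ← det_Nmat (f ∘ σ), h2, h3]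
  rcases Int.units_eq_one_or (Equiv.Perm.sign σ) with h | h <;> simp [h]


theorem exists_enum {d m : ℕ} {s : Finset (EuclideanSpace ℝ (Fin d))} (h : s.card = m) :
    ∃ f : Fin m → EuclideanSpace ℝ (Fin d), Set.range f = ↑s ∧ Function.Injective f := by
  refine ⟨Subtype.val ∘ (s.equivFinOfCardEq h).symm, ?_, ?_⟩
  · rw [Set.range_comp, Equiv.range_eq_univ, Set.image_univ, Subtype.range_coe_subtype]
    ext x; simp
  · exact Subtype.val_injective.comp (Equiv.injective _)

theorem enum_inj {d m : ℕ} {s : Finset (EuclideanSpace ℝ (Fin d))} (h : s.card = m)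
    {f : Fin m → EuclideanSpace ℝ (Fin d)} (hf : Set.range f = ↑s) : Function.Injective f := by
  classical
  have himg : Finset.image f Finset.univ = s := by
    apply Finset.coe_injective; rw [Finset.coe_image, Finset.coe_univ, Set.image_univ, hf]
  have := Finset.injOn_of_card_image_eq (f := f) (s := Finset.univ)
    (by rw [himg, h, Finset.card_univ, Fintype.card_fin])
  intro a b hab
  exact this (Finset.mem_coe.2 (Finset.mem_univ a)) (Finset.mem_coe.2 (Finset.mem_univ b)) hab

theorem exists_perm_comp {d m : ℕ} {s : Finset (EuclideanSpace ℝ (Fin d))} (h : s.card = m)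
    {f g : Fin m → EuclideanSpace ℝ (Fin d)} (hf : Set.range f = ↑s) (hg : Set.range g = ↑s) :
    ∃ σ : Equiv.Perm (Fin m), g = f ∘ σ := by
  have hfi := enum_inj h hf
  have hgi := enum_inj h hg
  refine ⟨(Equiv.ofInjective g hgi).trans ((Equiv.setCongr (hg.trans hf.symm)).trans
    (Equiv.ofInjective f hfi).symm), ?_⟩
  funext i
  simp [Equiv.ofInjective_apply, Equiv.apply_ofInjective_symm]

theorem simplexVolume_eq {d : ℕ} {s : Finset (EuclideanSpace ℝ (Fin d))} (h : s.card = d + 1)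
    {f : Fin (d + 1) → EuclideanSpace ℝ (Fin d)} (hf : Set.range f = ↑s) :
    simplexVolume s = |detAff f| / (Nat.factorial d) := by
  have hset : {v : ℝ | ∃ g : Fin (d + 1) → EuclideanSpace ℝ (Fin d),
      Set.range g = ↑s ∧
      v = |Matrix.det (Matrix.of fun i j : Fin d => (g i.succ - g 0) j)| /
            (Nat.factorial d)} = {|detAff f| / (Nat.factorial d)} := by
    ext v
    constructor
    · rintro ⟨g, hg, rfl⟩
      obtain ⟨σ, rfl⟩ := exists_perm_comp h hf hg
      have := abs_detAff_comp f σ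
      simp only [Set.mem_singleton_iff, detAff] at this ⊢
      rw [this]
    · rintro rfl
      exact ⟨f, hf, rfl⟩
  rw [simplexVolume, hset, csSup_singleton]


def snocE {m : ℕ} (a : Fin (m + 1) → EuclideanSpace ℝ (Fin (m + 1)))
    (p : EuclideanSpace ℝ (Fin (m + 1))) : Fin (m + 2) → EuclideanSpace ℝ (Fin (m + 1)) :=
  Fin.snoc a p

@[simp] theorem snocE_castSucc {m : ℕ} (a : Fin (m + 1) → EuclideanSpace ℝ (Fin (m + 1)))
    (p : EuclideanSpace ℝ (Fin (m + 1))) (i : Fin (m + 1)) :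
    snocE a p (Fin.castSucc i) = a i := Fin.snoc_castSucc _ _ _

@[simp] theorem snocE_last {m : ℕ} (a : Fin (m + 1) → EuclideanSpace ℝ (Fin (m + 1)))
    (p : EuclideanSpace ℝ (Fin (m + 1))) : snocE a p (Fin.last (m + 1)) = p :=
  Fin.snoc_last _ _

@[simp] theorem snocE_zero {m : ℕ} (a : Fin (m + 1) → EuclideanSpace ℝ (Fin (m + 1)))
    (p : EuclideanSpace ℝ (Fin (m + 1))) : snocE a p 0 = a 0 := by
  rw [show ((0 : Fin (m + 2))) = Fin.castSucc 0 by simp, snocE_castSucc]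

noncomputable def wv {m : ℕ} (a : Fin (m + 1) → EuclideanSpace ℝ (Fin (m + 1)))
    (j : Fin (m + 1)) : ℝ :=
  (-1 : ℝ) ^ (m + (j : ℕ)) *
    (Matrix.of fun (r : Fin m) (j' : Fin m) => (a r.succ - a 0) (j.succAbove j')).det

noncomputable def cv {m : ℕ} (a : Fin (m + 1) → EuclideanSpace ℝ (Fin (m + 1))) : ℝ :=
  -∑ j, wv a j * a 0 j

theorem detAff_snoc {m : ℕ} (a : Fin (m + 1) → EuclideanSpace ℝ (Fin (m + 1)))
    (p : EuclideanSpace ℝ (Fin (m + 1))) :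
    detAff (snocE a p) = (∑ j, wv a j * p j) + cv a := by
  rw [detAff, Matrix.det_succ_row _ (Fin.last m)]
  have hrow : ∀ j, (Matrix.of fun i j : Fin (m + 1) =>
      (snocE a p i.succ - snocE a p 0) j) (Fin.last m) j = p j - a 0 j := by
    intro j
    simp only [Matrix.of_apply, Fin.succ_last, snocE_last, snocE_zero]
    simp [PiLp.sub_apply]
  have hsub : ∀ j : Fin (m + 1), ((Matrix.of fun i j : Fin (m + 1) =>
      (snocE a p i.succ - snocE a p 0) j).submatrix (Fin.last m).succAbove j.succAbove)
      = Matrix.of fun (r : Fin m) (j' : Fin m) => (a r.succ - a 0) (j.succAbove j') := by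
    intro j
    ext r j'
    simp only [Matrix.submatrix_apply, Matrix.of_apply, Fin.succAbove_last, Fin.succ_castSucc,
      snocE_castSucc, snocE_zero]
  have key : ∀ j : Fin (m + 1), (-1 : ℝ) ^ ((Fin.last m : ℕ) + (j : ℕ)) *
      ((Matrix.of fun i j : Fin (m + 1) => (snocE a p i.succ - snocE a p 0) j) (Fin.last m) j) *
      (((Matrix.of fun i j : Fin (m + 1) =>
        (snocE a p i.succ - snocE a p 0) j)).submatrix (Fin.last m).succAbove j.succAbove).det
      = wv a j * p j - wv a j * a 0 j := by
    intro j
    rw [hrow j, hsub j, wv]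
    simp only [Fin.val_last]
    ring
  rw [Finset.sum_congr rfl fun j _ => key j, Finset.sum_sub_distrib, cv]
  ring

theorem detAff_snoc_self {m : ℕ} (a : Fin (m + 1) → EuclideanSpace ℝ (Fin (m + 1)))
    (i : Fin (m + 1)) : detAff (snocE a (a i)) = 0 := by
  rcases Fin.eq_zero_or_eq_succ i with rfl | ⟨r, rfl⟩
  · apply Matrix.det_eq_zero_of_row_eq_zero (Fin.last m)
    intro j
    simp only [Matrix.of_apply, Fin.succ_last, snocE_last, snocE_zero]
    simp [PiLp.sub_apply]
  · apply Matrix.det_zero_of_row_eq (i := Fin.castSucc r) (j := Fin.last m)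
    · exact (Fin.castSucc_lt_last r).ne
    · funext j
      simp only [Matrix.of_apply, Fin.succ_last, Fin.succ_castSucc, snocE_last, snocE_castSucc,
        snocE_zero]

theorem wv_ne_zero {m : ℕ} {a : Fin (m + 1) → EuclideanSpace ℝ (Fin (m + 1))}
    {p₀ : EuclideanSpace ℝ (Fin (m + 1))} (h : detAff (snocE a p₀) ≠ 0) : wv a ≠ 0 := by
  intro hw
  have h0 := detAff_snoc_self a 0
  rw [detAff_snoc] at h0 h
  simp only [hw, Pi.zero_apply, zero_mul, Finset.sum_const_zero, zero_add] at h0 h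
  exact h h0


/-- E1: if all points lie on a level set of a nonzero linear functional, detAff = 0. -/
theorem detAff_eq_zero_of_level {d : ℕ} {w : Fin d → ℝ} (hw : w ≠ 0) {c : ℝ}
    {f : Fin (d + 1) → EuclideanSpace ℝ (Fin d)} (h : ∀ i, ∑ j, w j * f i j = c) :
    detAff f = 0 := by
  classical
  rw [detAff, ← Matrix.exists_mulVec_eq_zero_iff]
  refine ⟨w, hw, ?_⟩
  funext i
  simp only [Matrix.mulVec, dotProduct, Matrix.of_apply, Pi.zero_apply]
  have : ∀ j, (f i.succ - f 0) j = f i.succ j - f 0 j := fun j => by simp [PiLp.sub_apply]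
  rw [Finset.sum_congr rfl fun j _ => by rw [this j]]
  have := h i.succ
  have h0 := h 0
  calc ∑ j, (f i.succ j - f 0 j) * w j
      = (∑ j, w j * f i.succ j) - ∑ j, w j * f 0 j := by
        rw [← Finset.sum_sub_distrib]; exact Finset.sum_congr rfl fun j _ => by ring
    _ = 0 := by rw [this, h0, sub_self]

/-- E2: affinely independent (d+1) points have detAff ≠ 0. -/
theorem detAff_ne_zero_of_affineIndependent {d : ℕ}
    {f : Fin (d + 1) → EuclideanSpace ℝ (Fin d)} (hf : AffineIndependent ℝ f) :
    detAff f ≠ 0 := by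
  classical
  rw [detAff, Ne, ← Matrix.exists_vecMul_eq_zero_iff]
  rintro ⟨v, hv, hvM⟩
  have hli := (affineIndependent_iff_linearIndependent_vsub ℝ f 0).1 hf
  let e : Fin d ≃ {x : Fin (d + 1) // x ≠ 0} :=
    { toFun := fun i => ⟨i.succ, Fin.succ_ne_zero i⟩
      invFun := fun x => x.1.pred x.2
      left_inv := fun i => by simp
      right_inv := fun x => by simp }
  have hli' : LinearIndependent ℝ (fun i : Fin d => f i.succ - f 0) := by
    have := hli.comp e e.injective
    exact this
  rw [Fintype.linearIndependent_iff] at hli'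
  apply hv
  funext i0
  refine hli' v ?_ i0
  have hsum : ∀ j, EuclideanSpace.projₗ (𝕜 := ℝ) j (∑ i, v i • (f i.succ - f 0)) = 0 := by
    intro j
    rw [map_sum]
    have := congrFun hvM j
    simp only [Matrix.vecMul, dotProduct, Matrix.of_apply, Pi.zero_apply] at this
    rw [← this]
    exact Finset.sum_congr rfl fun i _ => by
      simp [EuclideanSpace.projₗ, PiLp.projₗ, PiLp.smul_apply]
  refine PiLp.ext fun j => ?_
  exact hsum j


/-- Phase 1: either ≥ t points of P on a level set, or P contains d+1 points with detAff ≠ 0. -/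
theorem phase1 {d t : ℕ} (hd : 1 ≤ d) (ht : 1 ≤ t) {P : Finset (EuclideanSpace ℝ (Fin d))}
    (hlev : ∀ w : Fin d → ℝ, w ≠ 0 → ∀ c : ℝ,
      (P.filter (fun p => ∑ j, w j * p j = c)).card < t)
    (hPt : t ≤ P.card) :
    ∃ e₀ ⊆ P, e₀.card = d + 1 ∧
      ∃ f : Fin (d + 1) → EuclideanSpace ℝ (Fin d), Set.range f = ↑e₀ ∧ detAff f ≠ 0 := by
  classical
  obtain ⟨tset, htsub, htspan, htai⟩ := exists_affineIndependent ℝ (EuclideanSpace ℝ (Fin d))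
    (↑P : Set (EuclideanSpace ℝ (Fin d)))
  have htfin : tset.Finite := Set.Finite.subset P.finite_toSet htsub
  set tF : Finset (EuclideanSpace ℝ (Fin d)) := htfin.toFinset with htF
  have htFsub : tF ⊆ P := fun x hx => by
    have : x ∈ tset := by simpa [htF] using hx
    exact Finset.mem_coe.1 (htsub this)
  have htFcoe : (↑tF : Set (EuclideanSpace ℝ (Fin d))) = tset := htfin.coe_toFinset
  rcases le_or_gt (d + 1) tF.card with hge | hlt
  · -- pick d+1 points of tF
    obtain ⟨e₀, he₀sub, he₀card⟩ := Finset.exists_subset_card_eq hge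
    obtain ⟨f, hf, hfinj⟩ := exists_enum he₀card
    refine ⟨e₀, he₀sub.trans htFsub, he₀card, f, hf, ?_⟩
    apply detAff_ne_zero_of_affineIndependent
    have hsub' : (↑e₀ : Set (EuclideanSpace ℝ (Fin d))) ⊆ tset := by
      rw [← htFcoe]; exact_mod_cast Finset.coe_subset.2 he₀sub
    have hai : AffineIndependent ℝ (fun x : (↑e₀ : Set (EuclideanSpace ℝ (Fin d))) =>
        (x : EuclideanSpace ℝ (Fin d))) := htai.mono hsub'
    have : f = (fun x : (↑e₀ : Set (EuclideanSpace ℝ (Fin d))) =>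
        (x : EuclideanSpace ℝ (Fin d))) ∘ (fun i : Fin (d + 1) =>
          (⟨f i, by rw [← hf]; exact Set.mem_range_self i⟩ :
            (↑e₀ : Set (EuclideanSpace ℝ (Fin d))))) := rfl
    rw [this]
    exact hai.comp_embedding ⟨_, fun i j hij => hfinj (by simpa using congrArg Subtype.val hij)⟩
  · -- all of P on a hyperplane: contradiction with hlev
    exfalso
    have hV : vectorSpan ℝ tset ≠ ⊤ := by
      intro htop
      have hfr : Module.finrank ℝ (vectorSpan ℝ tset) = d := by
        rw [htop]; simpa using finrank_euclideanSpace_fin (𝕜 := ℝ) (n := d)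
      rcases Nat.eq_zero_or_pos tF.card with h0 | hpos
      · have : tset = ∅ := by
          rw [← htFcoe]; simp [Finset.card_eq_zero.1 h0]
        rw [this, vectorSpan_empty] at hfr
        rw [finrank_bot] at hfr
        omega
      · obtain ⟨m', hm'⟩ : ∃ m', tF.card = m' + 1 := ⟨tF.card - 1, by omega⟩
        obtain ⟨g, hg, -⟩ := exists_enum hm'
        have : vectorSpan ℝ (Set.range g) = vectorSpan ℝ tset := by rw [hg, htFcoe]
        have hle := finrank_vectorSpan_range_le ℝ g
          (hc := (Fintype.card_fin (m' + 1) : Fintype.card (Fin (m' + 1)) = m' + 1))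
        rw [this, hfr] at hle
        omega
    obtain ⟨w, hwV, hw0⟩ := Submodule.ne_bot_iff _ |>.1
      (fun hbot => hV ((Submodule.orthogonal_eq_bot_iff).1 hbot))
    have hP0 : P.Nonempty := Finset.card_pos.1 (by omega)
    obtain ⟨q₀, hq₀⟩ := hP0
    have hinner : ∀ p ∈ P, ∑ j, w j * p j = ∑ j, w j * q₀ j := by
      intro p hp
      have hmem : p -ᵥ q₀ ∈ vectorSpan ℝ tset := by
        rw [← direction_affineSpan, htspan, direction_affineSpan]
        exact vsub_mem_vectorSpan ℝ (Finset.mem_coe.2 hp) (Finset.mem_coe.2 hq₀)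
      have := (Submodule.mem_orthogonal _ w).1 hwV _ hmem
      have hinn : (inner ℝ (p -ᵥ q₀) w : ℝ) = ∑ j, (p j - q₀ j) * w j := by
        rw [PiLp.inner_apply]
        refine Finset.sum_congr rfl fun j _ => ?_
        simp [RCLike.inner_apply, PiLp.sub_apply, mul_comm]
      rw [hinn] at this
      have : ∑ j, (p j * w j - q₀ j * w j) = 0 := by
        rw [← this]; exact Finset.sum_congr rfl fun j _ => by ring
      rw [Finset.sum_sub_distrib, sub_eq_zero] at this
      calc ∑ j, w j * p j = ∑ j, p j * w j := Finset.sum_congr rfl fun j _ => mul_comm _ _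
        _ = ∑ j, q₀ j * w j := this
        _ = ∑ j, w j * q₀ j := Finset.sum_congr rfl fun j _ => mul_comm _ _
    have hsub : P ⊆ P.filter (fun p => ∑ j, w j * p j = ∑ j, w j * q₀ j) := fun p hp =>
      Finset.mem_filter.2 ⟨hp, hinner p hp⟩
    have hwfun : (fun j => w j) ≠ (0 : Fin d → ℝ) := by
      intro h
      apply hw0
      have : ∀ j, w j = 0 := fun j => congrFun h j
      exact PiLp.ext this
    have h1 := hlev (fun j => w j) hwfun (∑ j, w j * q₀ j)
    have hle := Finset.card_le_card hsub
    exact Nat.lt_irrefl _ (lt_of_le_of_lt (hPt.trans hle) h1)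



noncomputable instance EdecEq {d : ℕ} : DecidableEq (EuclideanSpace ℝ (Fin d)) :=
  Classical.decEq _

theorem range_snocE {m : ℕ} (a : Fin (m + 1) → EuclideanSpace ℝ (Fin (m + 1)))
    (p : EuclideanSpace ℝ (Fin (m + 1))) :
    Set.range (snocE a p) = insert p (Set.range a) := by
  ext x
  constructor
  · rintro ⟨i, rfl⟩
    refine Fin.lastCases ?_ ?_ i
    · rw [snocE_last]; exact Set.mem_insert _ _
    · intro j; rw [snocE_castSucc]; exact Set.mem_insert_of_mem _ ⟨j, rfl⟩
  · intro hx
    rcases Set.mem_insert_iff.1 hx with h | ⟨i, rfl⟩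
    · exact ⟨Fin.last (m + 1), by rw [snocE_last, h]⟩
    · exact ⟨Fin.castSucc i, snocE_castSucc a p i⟩

def GoodS {d : ℕ} (S : Finset (EuclideanSpace ℝ (Fin d))) : Prop :=
  (∀ e ∈ Finset.powersetCard (d + 1) S, simplexVolume e ≠ 0) ∧
  (∀ e₁ ∈ Finset.powersetCard (d + 1) S, ∀ e₂ ∈ Finset.powersetCard (d + 1) S,
      simplexVolume e₁ = simplexVolume e₂ → e₁ = e₂)

/-- compute simplexVolume of `insert p A` via an enumeration of `A`. -/
theorem vol_insert {m : ℕ} {A : Finset (EuclideanSpace ℝ (Fin (m + 1)))}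
    (hA : A.card = m + 1) {a : Fin (m + 1) → EuclideanSpace ℝ (Fin (m + 1))}
    (ha : Set.range a = ↑A) {p : EuclideanSpace ℝ (Fin (m + 1))} (hp : p ∉ A) :
    simplexVolume (insert p A) = |detAff (snocE a p)| / (Nat.factorial (m + 1)) := by
  classical
  have hcard : (insert p A).card = (m + 1) + 1 := by
    rw [Finset.card_insert_of_notMem hp, hA]
  exact simplexVolume_eq hcard (by rw [range_snocE, ha, Finset.coe_insert])

/-- every d-subset of S has nonzero gradient, given the invariant. -/
theorem wv_ne_zero_of_good {m : ℕ} {S A : Finset (EuclideanSpace ℝ (Fin (m + 1)))}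
    (hgood : GoodS S) (hScard : m + 2 ≤ S.card)
    (hA : A ∈ Finset.powersetCard (m + 1) S)
    {a : Fin (m + 1) → EuclideanSpace ℝ (Fin (m + 1))} (ha : Set.range a = ↑A) :
    wv a ≠ 0 := by
  classical
  obtain ⟨hAS, hAcard⟩ := Finset.mem_powersetCard.1 hA
  have : ∃ q ∈ S, q ∉ A := by
    by_contra h
    push_neg at h
    have : S ⊆ A := fun x hx => h x hx
    have := Finset.card_le_card this
    omega
  obtain ⟨q, hqS, hqA⟩ := this
  have hins : insert q A ∈ Finset.powersetCard (m + 1 + 1) S :=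
    Finset.mem_powersetCard.2 ⟨Finset.insert_subset hqS hAS,
      by rw [Finset.card_insert_of_notMem hqA, hAcard]⟩
  have hvol := hgood.1 _ hins
  rw [vol_insert hAcard ha hqA] at hvol
  have hD : detAff (snocE a q) ≠ 0 := by
    intro h0
    rw [h0] at hvol
    simp at hvol
  exact wv_ne_zero hD

theorem detFilter_lt {m t : ℕ} {P : Finset (EuclideanSpace ℝ (Fin (m + 1)))}
    (hlev : ∀ w : Fin (m + 1) → ℝ, w ≠ 0 → ∀ c : ℝ,
      (P.filter (fun p => ∑ j, w j * p j = c)).card < t)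
    {a : Fin (m + 1) → EuclideanSpace ℝ (Fin (m + 1))} (hw : wv a ≠ 0) (r : ℝ) :
    (P.filter (fun p => detAff (snocE a p) = r)).card < t := by
  classical
  refine lt_of_le_of_lt (Finset.card_le_card ?_) (hlev (wv a) hw (r - cv a))
  intro p hp
  rw [Finset.mem_filter] at hp ⊢
  refine ⟨hp.1, ?_⟩
  have h2 := hp.2
  rw [detAff_snoc] at h2
  linarith

theorem pairFilter_lt {m t : ℕ} (ht : 1 ≤ t) {P S : Finset (EuclideanSpace ℝ (Fin (m + 1)))}
    (hlev : ∀ w : Fin (m + 1) → ℝ, w ≠ 0 → ∀ c : ℝ,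
      (P.filter (fun p => ∑ j, w j * p j = c)).card < t)
    (hgood : GoodS S) (hScard : m + 2 ≤ S.card)
    {A B : Finset (EuclideanSpace ℝ (Fin (m + 1)))}
    (hA : A ∈ Finset.powersetCard (m + 1) S) (hB : B ∈ Finset.powersetCard (m + 1) S)
    (hAB : A ≠ B)
    {a b : Fin (m + 1) → EuclideanSpace ℝ (Fin (m + 1))}
    (ha : Set.range a = ↑A) (hb : Set.range b = ↑B) {s : ℝ} (hs : s = 1 ∨ s = -1) :
    (P.filter (fun p => detAff (snocE a p) = s * detAff (snocE b p))).card < t := by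
  classical
  have hwa := wv_ne_zero_of_good hgood hScard hA ha
  by_cases hw : (fun j => wv a j - s * wv b j) = (0 : Fin (m + 1) → ℝ)
  · have hwj : ∀ j, wv a j = s * wv b j := by
      intro j
      have := congrFun hw j
      simp only [Pi.zero_apply] at this
      linarith
    by_cases hc : cv a = s * cv b
    · exfalso
      have hvals : ∀ q, detAff (snocE a q) = s * detAff (snocE b q) := by
        intro q
        rw [detAff_snoc, detAff_snoc, mul_add, ← hc, Finset.mul_sum]
        congr 1
        exact Finset.sum_congr rfl fun j _ => by rw [hwj j]; ring
      obtain ⟨x, hxB, hxA⟩ : ∃ x ∈ B, x ∉ A := by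
        by_contra h
        push_neg at h
        obtain ⟨hAS, hAcard⟩ := Finset.mem_powersetCard.1 hA
        obtain ⟨hBS, hBcard⟩ := Finset.mem_powersetCard.1 hB
        exact hAB (Finset.eq_of_subset_of_card_le (fun x hx => h x hx)
          (by omega)).symm
      have hcard2 : m + 2 ≤ (A ∪ B).card := by
        have hsub : insert x A ⊆ A ∪ B := Finset.insert_subset
          (Finset.mem_union_right _ hxB) Finset.subset_union_left
        have := Finset.card_le_card hsub
        rw [Finset.card_insert_of_notMem hxA, (Finset.mem_powersetCard.1 hA).2] at this
        omega
      obtain ⟨e, hesub, hecard⟩ := Finset.exists_subset_card_eq hcard2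
      have heS : e ∈ Finset.powersetCard (m + 1 + 1) S :=
        Finset.mem_powersetCard.2 ⟨hesub.trans (Finset.union_subset
          (Finset.mem_powersetCard.1 hA).1 (Finset.mem_powersetCard.1 hB).1), hecard⟩
      have hvol := hgood.1 _ heS
      obtain ⟨f, hf, -⟩ := exists_enum hecard
      have hlevall : ∀ i, ∑ j, wv a j * f i j = -(cv a) := by
        intro i
        have hfi : f i ∈ A ∪ B := hesub (by
          have : f i ∈ (↑e : Set (EuclideanSpace ℝ (Fin (m + 1)))) := by
            rw [← hf]; exact Set.mem_range_self i
          exact_mod_cast this)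
        have hz : detAff (snocE a (f i)) = 0 := by
          rcases Finset.mem_union.1 hfi with h | h
          · have : f i ∈ Set.range a := by rw [ha]; exact_mod_cast h
            obtain ⟨i0, hi0⟩ := this
            rw [← hi0]
            exact detAff_snoc_self a i0
          · have : f i ∈ Set.range b := by rw [hb]; exact_mod_cast h
            obtain ⟨i0, hi0⟩ := this
            rw [← hi0, hvals (b i0), detAff_snoc_self b i0, mul_zero]
        rw [detAff_snoc] at hz
        linarith
      have hdz := detAff_eq_zero_of_level hwa hlevall
      rw [simplexVolume_eq hecard hf, hdz] at hvol
      simp at hvol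
    · have hempty : P.filter (fun p => detAff (snocE a p) = s * detAff (snocE b p)) = ∅ := by
        refine Finset.filter_false_of_mem fun p hp => ?_
        intro heq
        rw [detAff_snoc, detAff_snoc, mul_add, Finset.mul_sum] at heq
        apply hc
        have hsum : ∑ j, wv a j * p j = ∑ j, s * (wv b j * p j) :=
          Finset.sum_congr rfl fun j _ => by rw [hwj j]; ring
        rw [hsum] at heq
        linarith
      rw [hempty]
      simp; omega
  · refine lt_of_le_of_lt (Finset.card_le_card ?_)
      (hlev (fun j => wv a j - s * wv b j) hw (s * cv b - cv a))
    intro p hp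
    rw [Finset.mem_filter] at hp ⊢
    refine ⟨hp.1, ?_⟩
    have h2 := hp.2
    rw [detAff_snoc, detAff_snoc, mul_add, Finset.mul_sum] at h2
    have : ∑ j, (wv a j - s * wv b j) * p j
        = ∑ j, wv a j * p j - ∑ j, s * (wv b j * p j) := by
      rw [← Finset.sum_sub_distrib]
      exact Finset.sum_congr rfl fun j _ => by ring
    rw [this]
    linarith

set_option maxHeartbeats 1000000 in
theorem step {m t : ℕ} (ht3 : 3 ≤ t) {P S : Finset (EuclideanSpace ℝ (Fin (m + 1)))}
    (hlev : ∀ w : Fin (m + 1) → ℝ, w ≠ 0 → ∀ c : ℝ,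
      (P.filter (fun p => ∑ j, w j * p j = c)).card < t)
    (hSP : S ⊆ P) (hScard : m + 2 ≤ S.card) (hSt : S.card < t)
    (hn : 8 * t ^ (2 * (m + 1) + 2) ≤ P.card) (hgood : GoodS S) :
    ∃ S', S ⊆ S' ∧ S' ⊆ P ∧ S'.card = S.card + 1 ∧ GoodS S' := by
  classical
  let enumOf : Finset (EuclideanSpace ℝ (Fin (m + 1))) → (Fin (m + 1) → EuclideanSpace ℝ (Fin (m + 1))) :=
    fun A => if h : A.card = m + 1 then Classical.choose (exists_enum h) else fun _ => 0
  have henum : ∀ A : Finset (EuclideanSpace ℝ (Fin (m + 1))), A.card = m + 1 → Set.range (enumOf A) = ↑A := by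
    intro A h
    simp only [enumOf, dif_pos h]
    exact (Classical.choose_spec (exists_enum h)).1
  let F1 : Finset (EuclideanSpace ℝ (Fin (m + 1))) → Finset (EuclideanSpace ℝ (Fin (m + 1))) := fun A => P.filter (fun p => detAff (snocE (enumOf A) p) = 0)
  let F2 : Finset (EuclideanSpace ℝ (Fin (m + 1))) × Finset (EuclideanSpace ℝ (Fin (m + 1))) × ℝ → Finset (EuclideanSpace ℝ (Fin (m + 1))) := fun x =>
    P.filter (fun p => detAff (snocE (enumOf x.1) p)
      = x.2.2 * ((Nat.factorial (m + 1) : ℝ) * simplexVolume x.2.1))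
  let F3 : Finset (EuclideanSpace ℝ (Fin (m + 1))) × Finset (EuclideanSpace ℝ (Fin (m + 1))) × ℝ → Finset (EuclideanSpace ℝ (Fin (m + 1))) := fun x =>
    P.filter (fun p => x.1 ≠ x.2.1 ∧
      detAff (snocE (enumOf x.1) p) = x.2.2 * detAff (snocE (enumOf x.2.1) p))
  let Bad := ((S ∪ (Finset.powersetCard (m + 1) S).biUnion F1) ∪ ((Finset.powersetCard (m + 1) S) ×ˢ (Finset.powersetCard (m + 2) S) ×ˢ ({1, -1} : Finset ℝ)).biUnion F2)
      ∪ ((Finset.powersetCard (m + 1) S) ×ˢ (Finset.powersetCard (m + 1) S) ×ˢ ({1, -1} : Finset ℝ)).biUnion F3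
  have hwA : ∀ A ∈ (Finset.powersetCard (m + 1) S), wv (enumOf A) ≠ 0 := fun A hA =>
    wv_ne_zero_of_good hgood hScard hA (henum A (Finset.mem_powersetCard.1 hA).2)
  have ht1 : 1 ≤ t := by omega
  have hF1 : ∀ A ∈ (Finset.powersetCard (m + 1) S), (F1 A).card ≤ t := fun A hA =>
    le_of_lt (detFilter_lt hlev (hwA A hA) 0)
  have hF2 : ∀ x ∈ (Finset.powersetCard (m + 1) S) ×ˢ (Finset.powersetCard (m + 2) S) ×ˢ ({1, -1} : Finset ℝ), (F2 x).card ≤ t := by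
    rintro ⟨A, e, s⟩ hx
    rw [Finset.mem_product] at hx
    exact le_of_lt (detFilter_lt hlev (hwA A hx.1) _)
  have hF3 : ∀ x ∈ (Finset.powersetCard (m + 1) S) ×ˢ (Finset.powersetCard (m + 1) S) ×ˢ ({1, -1} : Finset ℝ), (F3 x).card ≤ t := by
    rintro ⟨A, B, s⟩ hx
    rw [Finset.mem_product] at hx
    obtain ⟨hxA, hxBs⟩ := hx
    rw [Finset.mem_product] at hxBs
    obtain ⟨hxB, hxs⟩ := hxBs
    by_cases hAB : A = B
    · have : F3 (A, B, s) = ∅ :=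
        Finset.filter_false_of_mem fun p hp h => h.1 hAB
      rw [this]
      simp
    · have hsv : s = 1 ∨ s = -1 := by
        simpa using hxs
      have hlt := pairFilter_lt ht1 hlev hgood hScard hxA hxB hAB
        (henum A (Finset.mem_powersetCard.1 hxA).2)
        (henum B (Finset.mem_powersetCard.1 hxB).2) hsv
      refine le_trans (le_of_le_of_eq (Finset.card_le_card ?_) rfl) (le_of_lt hlt)
      intro p hp
      rw [Finset.mem_filter] at hp ⊢
      exact ⟨hp.1, hp.2.2⟩
  have hSt' : S.card ≤ t := le_of_lt hSt
  have hpcd : (Finset.powersetCard (m + 1) S).card ≤ t ^ (m + 1) := by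
    rw [Finset.card_powersetCard]
    exact le_trans (Nat.choose_le_pow _ _) (Nat.pow_le_pow_left hSt' _)
  have hpce : (Finset.powersetCard (m + 2) S).card ≤ t ^ (m + 2) := by
    rw [Finset.card_powersetCard]
    exact le_trans (Nat.choose_le_pow _ _) (Nat.pow_le_pow_left hSt' _)
  have hsigns : ({1, -1} : Finset ℝ).card ≤ 2 := Finset.card_insert_le _ _ |>.trans (by simp)
  have hb1 : ((Finset.powersetCard (m + 1) S).biUnion F1).card ≤ t ^ (m + 1) * t :=
    le_trans (Finset.card_biUnion_le) <| le_trans (Finset.sum_le_card_nsmul _ _ t hF1)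
      (by rw [smul_eq_mul]; exact Nat.mul_le_mul_right t hpcd)
  have hb2 : (((Finset.powersetCard (m + 1) S) ×ˢ (Finset.powersetCard (m + 2) S) ×ˢ ({1, -1} : Finset ℝ)).biUnion F2).card
      ≤ (t ^ (m + 1) * (t ^ (m + 2) * 2)) * t := by
    refine le_trans (Finset.card_biUnion_le) <|
      le_trans (Finset.sum_le_card_nsmul _ _ t hF2) ?_
    rw [smul_eq_mul]
    refine Nat.mul_le_mul_right t ?_
    rw [Finset.card_product, Finset.card_product]
    exact Nat.mul_le_mul hpcd (Nat.mul_le_mul hpce hsigns)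
  have hb3 : (((Finset.powersetCard (m + 1) S) ×ˢ (Finset.powersetCard (m + 1) S) ×ˢ ({1, -1} : Finset ℝ)).biUnion F3).card
      ≤ (t ^ (m + 1) * (t ^ (m + 1) * 2)) * t := by
    refine le_trans (Finset.card_biUnion_le) <|
      le_trans (Finset.sum_le_card_nsmul _ _ t hF3) ?_
    rw [smul_eq_mul]
    refine Nat.mul_le_mul_right t ?_
    rw [Finset.card_product, Finset.card_product]
    exact Nat.mul_le_mul hpcd (Nat.mul_le_mul hpcd hsigns)
  have hBadcard : Bad.card < 8 * t ^ (2 * (m + 1) + 2) := by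
    have h1 := Finset.card_union_le ((S ∪ (Finset.powersetCard (m + 1) S).biUnion F1) ∪
      ((Finset.powersetCard (m + 1) S) ×ˢ (Finset.powersetCard (m + 2) S) ×ˢ ({1, -1} : Finset ℝ)).biUnion F2)
      (((Finset.powersetCard (m + 1) S) ×ˢ (Finset.powersetCard (m + 1) S) ×ˢ ({1, -1} : Finset ℝ)).biUnion F3)
    have h2 := Finset.card_union_le (S ∪ (Finset.powersetCard (m + 1) S).biUnion F1)
      (((Finset.powersetCard (m + 1) S) ×ˢ (Finset.powersetCard (m + 2) S) ×ˢ ({1, -1} : Finset ℝ)).biUnion F2)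
    have h3 := Finset.card_union_le S ((Finset.powersetCard (m + 1) S).biUnion F1)
    have e1 : t ≤ t ^ (2 * (m + 1) + 2) := Nat.le_self_pow (by omega) t
    have e2 : t ^ (m + 1) * t ≤ t ^ (2 * (m + 1) + 2) := by
      rw [← pow_succ]
      exact Nat.pow_le_pow_right ht1 (by omega)
    have e3 : (t ^ (m + 1) * (t ^ (m + 2) * 2)) * t = 2 * t ^ (2 * (m + 1) + 2) := by
      rw [show 2 * (m + 1) + 2 = (m + 1) + (m + 2) + 1 by ring, pow_succ, pow_add]
      ring
    have e4 : (t ^ (m + 1) * (t ^ (m + 1) * 2)) * t = 2 * t ^ (2 * m + 3) := by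
      rw [show 2 * m + 3 = (m + 1) + (m + 1) + 1 by ring, pow_succ, pow_add]
      ring
    have e4' : t ^ (2 * m + 3) ≤ t ^ (2 * (m + 1) + 2) := Nat.pow_le_pow_right ht1 (by omega)
    have hpos : 1 ≤ t ^ (2 * (m + 1) + 2) := Nat.one_le_pow _ _ (by omega)
    unfold Bad
    omega
  have hBadP : Bad ⊆ P := by
    intro x hx
    rcases Finset.mem_union.1 hx with hx | hx
    · rcases Finset.mem_union.1 hx with hx | hx
      · rcases Finset.mem_union.1 hx with hx | hx
        · exact hSP hx
        · obtain ⟨A, -, hxA⟩ := Finset.mem_biUnion.1 hx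
          exact (Finset.filter_subset _ _) hxA
      · obtain ⟨y, -, hxy⟩ := Finset.mem_biUnion.1 hx
        exact (Finset.filter_subset _ _) hxy
    · obtain ⟨y, -, hxy⟩ := Finset.mem_biUnion.1 hx
      exact (Finset.filter_subset _ _) hxy
  obtain ⟨p, hpP, hpBad⟩ : ∃ p ∈ P, p ∉ Bad := by
    by_contra h
    push_neg at h
    have := Finset.card_le_card h
    omega
  have hpS : p ∉ S := fun h => hpBad (Finset.mem_union_left _
    (Finset.mem_union_left _ (Finset.mem_union_left _ h)))
  have hp1 : ∀ A ∈ (Finset.powersetCard (m + 1) S), detAff (snocE (enumOf A) p) ≠ 0 := by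
    intro A hA h
    exact hpBad (Finset.mem_union_left _ (Finset.mem_union_left _ (Finset.mem_union_right _
      (Finset.mem_biUnion.2 ⟨A, hA, Finset.mem_filter.2 ⟨hpP, h⟩⟩))))
  have hp2 : ∀ A ∈ (Finset.powersetCard (m + 1) S), ∀ e ∈ (Finset.powersetCard (m + 2) S), ∀ s ∈ ({1, -1} : Finset ℝ),
      detAff (snocE (enumOf A) p) ≠ s * ((Nat.factorial (m + 1) : ℝ) * simplexVolume e) := by
    intro A hA e he s hs h
    exact hpBad (Finset.mem_union_left _ (Finset.mem_union_right _
      (Finset.mem_biUnion.2 ⟨(A, e, s), by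
        rw [Finset.mem_product]
        exact ⟨hA, Finset.mem_product.2 ⟨he, hs⟩⟩, Finset.mem_filter.2 ⟨hpP, h⟩⟩)))
  have hp3 : ∀ A ∈ (Finset.powersetCard (m + 1) S), ∀ B ∈ (Finset.powersetCard (m + 1) S), A ≠ B → ∀ s ∈ ({1, -1} : Finset ℝ),
      detAff (snocE (enumOf A) p) ≠ s * detAff (snocE (enumOf B) p) := by
    intro A hA B hB hAB s hs h
    exact hpBad (Finset.mem_union_right _
      (Finset.mem_biUnion.2 ⟨(A, B, s), by
        rw [Finset.mem_product]
        exact ⟨hA, Finset.mem_product.2 ⟨hB, hs⟩⟩, Finset.mem_filter.2 ⟨hpP, hAB, h⟩⟩))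
  -- facts about subsets of insert p S containing p
  have key : ∀ e ∈ Finset.powersetCard (m + 2) (insert p S), p ∈ e →
      e.erase p ∈ (Finset.powersetCard (m + 1) S) ∧ e = insert p (e.erase p) ∧ p ∉ e.erase p ∧
        simplexVolume e = |detAff (snocE (enumOf (e.erase p)) p)| / (Nat.factorial (m + 1)) := by
    intro e he hpe
    obtain ⟨hesub, hecard⟩ := Finset.mem_powersetCard.1 he
    have hAsub : e.erase p ⊆ S := by
      intro x hx
      obtain ⟨hxne, hxe⟩ := Finset.mem_erase.1 hx
      rcases Finset.mem_insert.1 (hesub hxe) with h | h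
      · exact absurd h hxne
      · exact h
    have hAcard : (e.erase p).card = m + 1 := by
      rw [Finset.card_erase_of_mem hpe, hecard]
      omega
    have hApcd : e.erase p ∈ (Finset.powersetCard (m + 1) S) := Finset.mem_powersetCard.2 ⟨hAsub, hAcard⟩
    have hpA : p ∉ e.erase p := Finset.notMem_erase _ _
    have hins : e = insert p (e.erase p) := (Finset.insert_erase hpe).symm
    refine ⟨hApcd, hins, hpA, ?_⟩
    conv_lhs => rw [hins]
    exact vol_insert hAcard (henum _ hAcard) hpA
  refine ⟨insert p S, Finset.subset_insert _ _, Finset.insert_subset hpP hSP,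
    Finset.card_insert_of_notMem hpS, ?_, ?_⟩
  · -- GoodS.1
    intro e he
    by_cases hpe : p ∈ e
    · obtain ⟨hApcd, hins, hpA, hvol⟩ := key e he hpe
      rw [hvol]
      have := hp1 _ hApcd
      positivity
    · have heS : e ∈ (Finset.powersetCard (m + 2) S) := by
        obtain ⟨hesub, hecard⟩ := Finset.mem_powersetCard.1 he
        refine Finset.mem_powersetCard.2 ⟨fun x hx => ?_, hecard⟩
        rcases Finset.mem_insert.1 (hesub hx) with h | h
        · exact absurd (h ▸ hx) hpe
        · exact h
      exact hgood.1 e heS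
  · -- GoodS.2
    intro e₁ he₁ e₂ he₂ hveq
    have hfac : (0 : ℝ) < (Nat.factorial (m + 1) : ℝ) := by
      exact_mod_cast Nat.factorial_pos _
    have hsubS : ∀ e, e ∈ Finset.powersetCard (m + 2) (insert p S) → p ∉ e → e ∈ (Finset.powersetCard (m + 2) S) := by
      intro e he hpe
      obtain ⟨hesub, hecard⟩ := Finset.mem_powersetCard.1 he
      refine Finset.mem_powersetCard.2 ⟨fun x hx => ?_, hecard⟩
      rcases Finset.mem_insert.1 (hesub hx) with h | h
      · exact absurd (h ▸ hx) hpe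
      · exact h
    by_cases hpe₁ : p ∈ e₁ <;> by_cases hpe₂ : p ∈ e₂
    · -- both contain p
      obtain ⟨hA1, hins1, hpA1, hvol1⟩ := key e₁ he₁ hpe₁
      obtain ⟨hA2, hins2, hpA2, hvol2⟩ := key e₂ he₂ hpe₂
      by_cases hAB : e₁.erase p = e₂.erase p
      · rw [hins1, hins2, hAB]
      · exfalso
        rw [hvol1, hvol2, div_eq_div_iff (ne_of_gt hfac) (ne_of_gt hfac)] at hveq
        have habs : |detAff (snocE (enumOf (e₁.erase p)) p)|
            = |detAff (snocE (enumOf (e₂.erase p)) p)| :=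
          mul_right_cancel₀ (ne_of_gt hfac) hveq
        rcases abs_eq_abs.1 habs with h | h
        · exact hp3 _ hA1 _ hA2 hAB 1 (by simp) (by rw [h]; ring)
        · exact hp3 _ hA1 _ hA2 hAB (-1) (by simp) (by rw [h]; ring)
    · -- p ∈ e₁ only
      exfalso
      obtain ⟨hA1, hins1, hpA1, hvol1⟩ := key e₁ he₁ hpe₁
      have he₂S := hsubS e₂ he₂ hpe₂
      rw [hvol1, div_eq_iff (ne_of_gt hfac)] at hveq
      rcases eq_or_eq_neg_of_abs_eq hveq with h | h
      · exact hp2 _ hA1 _ he₂S 1 (by simp) (by rw [h]; ring)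
      · exact hp2 _ hA1 _ he₂S (-1) (by simp) (by rw [h]; ring)
    · -- p ∈ e₂ only
      exfalso
      obtain ⟨hA2, hins2, hpA2, hvol2⟩ := key e₂ he₂ hpe₂
      have he₁S := hsubS e₁ he₁ hpe₁
      rw [hvol2, eq_comm, div_eq_iff (ne_of_gt hfac)] at hveq
      rcases eq_or_eq_neg_of_abs_eq hveq with h | h
      · exact hp2 _ hA2 _ he₁S 1 (by simp) (by rw [h]; ring)
      · exact hp2 _ hA2 _ he₁S (-1) (by simp) (by rw [h]; ring)
    · -- both in S
      exact hgood.2 e₁ (hsubS e₁ he₁ hpe₁) e₂ (hsubS e₂ he₂ hpe₂) hveq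


theorem stmt_8 (d t n : ℕ) (hd : 2 ≤ d) (ht : d + 1 ≤ t)
    (P : Finset (EuclideanSpace ℝ (Fin d))) (hP : P.card = n)
    (hn : 8 * t ^ (2 * d + 2) ≤ n) :
    ∃ S ⊆ P, t ≤ S.card ∧
      ∀ e₁ ∈ Finset.powersetCard (d + 1) S, ∀ e₂ ∈ Finset.powersetCard (d + 1) S,
        simplexVolume e₁ ≠ 0 → simplexVolume e₂ ≠ 0 →
        simplexVolume e₁ = simplexVolume e₂ → e₁ = e₂ := by
  classical
  obtain ⟨m, rfl⟩ : ∃ m, d = m + 1 := ⟨d - 1, by omega⟩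
  have hn' : 8 * t ^ (2 * (m + 1) + 2) ≤ P.card := by omega
  have ht3 : 3 ≤ t := by omega
  have hPt : t ≤ P.card := by
    have h1 : t ≤ t ^ (2 * (m + 1) + 2) := Nat.le_self_pow (by omega) t
    omega
  by_cases hcase : ∃ w : Fin (m + 1) → ℝ, w ≠ 0 ∧ ∃ c : ℝ,
      t ≤ (P.filter (fun p => ∑ j, w j * p j = c)).card
  · obtain ⟨w, hw, c, hcard⟩ := hcase
    refine ⟨P.filter (fun p => ∑ j, w j * p j = c), Finset.filter_subset _ _, hcard, ?_⟩
    intro e₁ he₁ e₂ he₂ hne₁ hne₂ heq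
    exfalso
    apply hne₁
    obtain ⟨hsub, hcard₁⟩ := Finset.mem_powersetCard.1 he₁
    obtain ⟨f, hf, -⟩ := exists_enum hcard₁
    rw [simplexVolume_eq hcard₁ hf]
    have hz : detAff f = 0 := by
      refine detAff_eq_zero_of_level hw (c := c) fun i => ?_
      have : f i ∈ e₁ := by
        have : f i ∈ (↑e₁ : Set (EuclideanSpace ℝ (Fin (m + 1)))) := by
          rw [← hf]; exact Set.mem_range_self i
        exact_mod_cast this
      exact (Finset.mem_filter.1 (hsub this)).2
    rw [hz]
    simp
  · push_neg at hcase
    have hlev : ∀ w : Fin (m + 1) → ℝ, w ≠ 0 → ∀ c : ℝ,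
        (P.filter (fun p => ∑ j, w j * p j = c)).card < t := hcase
    obtain ⟨e₀, he₀P, he₀card, f, hf, hdf⟩ := phase1 (by omega) (by omega) hlev hPt
    have hgood₀ : GoodS e₀ := by
      have hmem : ∀ e ∈ Finset.powersetCard (m + 1 + 1) e₀, e = e₀ := by
        intro e he
        obtain ⟨hsub, hc⟩ := Finset.mem_powersetCard.1 he
        exact Finset.eq_of_subset_of_card_le hsub (by omega)
      constructor
      · intro e he
        rw [hmem e he, simplexVolume_eq he₀card hf]
        positivity
      · intro e₁ h₁ e₂ h₂ _
        rw [hmem e₁ h₁, hmem e₂ h₂]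
    have main : ∀ k, m + 2 ≤ k → k ≤ t → ∃ S, S ⊆ P ∧ S.card = k ∧ GoodS S := by
      intro k hk1
      induction k, hk1 using Nat.le_induction with
      | base => exact fun _ => ⟨e₀, he₀P, he₀card, hgood₀⟩
      | succ k hk ih =>
        intro hk2
        obtain ⟨S, hSP, hScard, hgood⟩ := ih (by omega)
        obtain ⟨S', hSS', hS'P, hS'card, hgood'⟩ := step ht3 hlev hSP (by omega) (by omega)
          hn' hgood
        exact ⟨S', hS'P, by omega, hgood'⟩
    obtain ⟨S, hSP, hScard, hgood⟩ := main t (by omega) le_rfl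
    exact ⟨S, hSP, le_of_eq hScard.symm,
      fun e₁ he₁ e₂ he₂ _ _ heq => hgood.2 e₁ he₁ e₂ he₂ heq⟩
end
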